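/- arXiv:1401.7032 — 3 statements merged into one kernel-verified Lean document; each statement's English description precedes it below -/
import Mathlib

section
/- Let P be a finite irreducible stochastic matrix with stationary distribution π and period r, with cyclic classes Ω_0,…,Ω_{r−1}. For i ∈ Ω_{l₁}, j ∈ Ω_{l₂}, and ℓ ≡ l₂ − l₁ (mod r), one has lim_{m→∞} (P^{mr+ℓ})_{ij} = π_j · r. -/
/-- A stochastic matrix over a countable set `Ω`: nonnegative entries and each row sums to 1. -/
def IsStochastic {Ω : Type*} (P : Ω → Ω → ℝ) : Prop :=
  (∀ i j, 0 ≤ P i j) ∧ ∀ i, HasSum (fun j => P i j) 1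

/-- Matrix product over a countable index set. -/
noncomputable def stochMul {Ω : Type*} (P Q : Ω → Ω → ℝ) : Ω → Ω → ℝ :=
  fun i k => ∑' j, P i j * Q j k

-- Matrix powers `P^n`.
open Classical in
noncomputable def stochPow {Ω : Type*} (P : Ω → Ω → ℝ) : ℕ → Ω → Ω → ℝ
  | 0 => fun i j => if i = j then 1 else 0
  | n + 1 => stochMul (stochPow P n) P

/-- `i` leads to `j`: there is a path (possibly of length 0) from `i` to `j`,
i.e. `(P^n)_{ij} > 0` for some `n ≥ 0`. -/
def LeadsTo {Ω : Type*} (P : Ω → Ω → ℝ) (i j : Ω) : Prop :=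
  ∃ n : ℕ, 0 < stochPow P n i j

/-- `i` and `j` communicate: each leads to the other. -/
def Communicates {Ω : Type*} (P : Ω → Ω → ℝ) (i j : Ω) : Prop :=
  LeadsTo P i j ∧ LeadsTo P j i

/-- `P` is irreducible: every pair of states communicates. -/
def StochIrreducible {Ω : Type*} (P : Ω → Ω → ℝ) : Prop :=
  ∀ i j : Ω, Communicates P i j

/-- A state `i` is recurrent when `∑_n (P^n)_{ii} = ∞`, i.e. the series is not summable
(the entries being nonnegative). -/
def IsRecurrentState {Ω : Type*} (P : Ω → Ω → ℝ) (i : Ω) : Prop :=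
  ¬ Summable (fun n : ℕ => stochPow P n i i)

/-- `P` is recurrent when every state is recurrent. -/
def IsRecurrent {Ω : Type*} (P : Ω → Ω → ℝ) : Prop :=
  ∀ i : Ω, IsRecurrentState P i

/-- `d` is the greatest common divisor of the set `S ⊆ ℕ`. -/
def IsGCDOf (d : ℕ) (S : Set ℕ) : Prop :=
  (∀ n ∈ S, d ∣ n) ∧ ∀ e : ℕ, (∀ n ∈ S, e ∣ n) → e ∣ d

set_option linter.unusedSectionVars false
section
section basic
variable {Ω : Type*} [Fintype Ω] {P : Ω → Ω → ℝ}

open Classical in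
lemma stochPow_zero (i j : Ω) : stochPow P 0 i j = if i = j then 1 else 0 := rfl

lemma stochPow_succ (n : ℕ) (i j : Ω) :
    stochPow P (n + 1) i j = ∑ k, stochPow P n i k * P k j := by
  show stochMul _ _ _ _ = _
  rw [stochMul, tsum_fintype]

lemma rowsum_one (hP : IsStochastic P) (i : Ω) : ∑ j, P i j = 1 :=
  (hasSum_fintype fun j => P i j).unique (hP.2 i)

lemma stochPow_nonneg (hP : IsStochastic P) (n : ℕ) (i j : Ω) : 0 ≤ stochPow P n i j := by
  induction n generalizing i j with
  | zero => rw [stochPow_zero]; positivity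
  | succ n ih =>
    rw [stochPow_succ]
    exact Finset.sum_nonneg fun k _ => mul_nonneg (ih i k) (hP.1 k j)

lemma stochPow_rowsum (hP : IsStochastic P) (n : ℕ) (i : Ω) : ∑ j, stochPow P n i j = 1 := by
  induction n generalizing i with
  | zero => classical simp [stochPow_zero, Finset.sum_ite_eq]
  | succ n ih =>
    simp only [stochPow_succ]
    rw [Finset.sum_comm]
    calc ∑ k, ∑ j, stochPow P n i k * P k j
        = ∑ k, stochPow P n i k * ∑ j, P k j := by simp [Finset.mul_sum]
      _ = 1 := by simp [rowsum_one hP, ih]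

lemma stochPow_add (a b : ℕ) (i k : Ω) :
    stochPow P (a + b) i k = ∑ j, stochPow P a i j * stochPow P b j k := by
  induction b generalizing k with
  | zero => classical simp [stochPow_zero, Finset.sum_ite_eq, mul_comm]
  | succ b ih =>
    rw [show a + (b+1) = (a+b) + 1 by ring, stochPow_succ]
    simp only [ih, stochPow_succ, Finset.sum_mul, Finset.mul_sum]
    rw [Finset.sum_comm]
    exact Finset.sum_congr rfl fun j _ => Finset.sum_congr rfl fun z _ => by ring

lemma stochPow_one (i j : Ω) : stochPow P 1 i j = P i j := by
  classical
  rw [show (1:ℕ) = 0 + 1 from rfl, stochPow_succ]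
  simp [stochPow_zero, Finset.sum_ite_eq]

lemma le_stochPow_add (hP : IsStochastic P) (a b : ℕ) (i j k : Ω) :
    stochPow P a i j * stochPow P b j k ≤ stochPow P (a + b) i k := by
  rw [stochPow_add]
  exact Finset.single_le_sum (f := fun z => stochPow P a i z * stochPow P b z k)
    (fun z _ => mul_nonneg (stochPow_nonneg hP a i z) (stochPow_nonneg hP b z k))
    (Finset.mem_univ j)

end basic

lemma numerical_semigroup (T : Set ℕ) (hadd : ∀ a ∈ T, ∀ b ∈ T, a + b ∈ T)
    (g : ℕ) (hg : g ∈ T) (hg0 : 0 < g)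
    (hgcd : ∀ e : ℕ, (∀ n ∈ T, e ∣ n) → e ∣ 1) :
    ∃ N : ℕ, ∀ n ≥ N, n ∈ T := by
  haveI : NeZero g := ⟨hg0.ne'⟩
  set M := AddSubmonoid.closure T with hM
  have hTM : ∀ t ∈ T, t ∈ M := fun t ht => AddSubmonoid.subset_closure ht
  have hMT : ∀ x ∈ M, x = 0 ∨ x ∈ T := by
    intro x hx
    induction hx using AddSubmonoid.closure_induction with
    | mem y hy => exact Or.inr hy
    | zero => exact Or.inl rfl
    | add a b _ _ ha hb =>
      rcases ha with rfl | ha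
      · simpa using hb
      rcases hb with rfl | hb
      · exact Or.inr (by simpa using ha)
      · exact Or.inr (hadd _ ha _ hb)
  -- the image of M in ZMod g is an additive subgroup
  have neg_mem : ∀ m ∈ M, ∃ m' ∈ M, ((m' : ZMod g) = -(m : ZMod g)) := by
    intro m hm
    refine ⟨(g - 1) * m, ?_, ?_⟩
    · simpa [smul_eq_mul] using nsmul_mem hm (g - 1)
    · rw [Nat.cast_mul, Nat.cast_sub hg0, ZMod.natCast_self, Nat.cast_one]
      ring
  let H : AddSubgroup (ZMod g) :=
    { carrier := {c | ∃ m ∈ M, (m : ZMod g) = c}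
      zero_mem' := ⟨0, zero_mem M, by simp⟩
      add_mem' := by
        rintro a b ⟨m, hm, rfl⟩ ⟨m', hm', rfl⟩
        exact ⟨m + m', add_mem hm hm', by push_cast; ring⟩
      neg_mem' := by
        rintro a ⟨m, hm, rfl⟩
        exact neg_mem m hm }
  have hTH : ∀ t ∈ T, ((t : ZMod g) ∈ H) := fun t ht => ⟨t, hTM t ht, rfl⟩
  -- pull back to ℤ
  let K : AddSubgroup ℤ := AddSubgroup.comap (Int.castAddHom (ZMod g)) H
  obtain ⟨d, hd⟩ := Int.subgroup_cyclic K
  have hdvd : ∀ t ∈ T, (d.natAbs ∣ t) := by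
    intro t ht
    have : ((t : ℤ) : ZMod g) ∈ H := by push_cast; exact hTH t ht
    have htK : (t : ℤ) ∈ K := this
    rw [hd, AddSubgroup.mem_closure_singleton] at htK
    obtain ⟨k, hk⟩ := htK
    have hdt : d ∣ (t : ℤ) := ⟨k, by rw [← hk, smul_eq_mul]; ring⟩
    simpa using Int.natAbs_dvd_natAbs.mpr hdt
  have hd1 : d.natAbs = 1 := Nat.dvd_one.mp (hgcd _ hdvd)
  -- 1 ∈ H
  have h1H : (1 : ZMod g) ∈ H := by
    have h1K : (1 : ℤ) ∈ K := by
      rw [hd, AddSubgroup.mem_closure_singleton]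
      rcases Int.natAbs_eq_iff.mp hd1 with h | h
      · exact ⟨1, by simp [h]⟩
      · exact ⟨-1, by simp [h]⟩
    have h1H' : ((1:ℤ) : ZMod g) ∈ H := h1K
    rwa [Int.cast_one] at h1H'
  obtain ⟨m1, hm1M, hm1⟩ := h1H
  -- representatives of each class
  let f : ZMod g → ℕ := fun c => c.val * m1
  have hfM : ∀ c, f c ∈ M := fun c => by
    simpa [f, smul_eq_mul] using nsmul_mem hm1M c.val
  have hfc : ∀ c : ZMod g, ((f c : ℕ) : ZMod g) = c := by
    intro c
    push_cast [f]
    rw [hm1, ZMod.natCast_val, ZMod.cast_id]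
    ring
  refine ⟨g + Finset.univ.sup f, fun n hn => ?_⟩
  set c : ZMod g := (n : ZMod g)
  have hfle : f c ≤ Finset.univ.sup f := Finset.le_sup (Finset.mem_univ c)
  have hmn : f c + g ≤ n := by
    omega
  have hmod : n ≡ f c [MOD g] := by
    have : ((f c : ℕ) : ZMod g) = (n : ZMod g) := hfc c
    exact ((ZMod.natCast_eq_natCast_iff _ _ _).mp this).symm
  have hdvd2 : g ∣ n - f c := (Nat.modEq_iff_dvd' (by omega)).mp hmod.symm
  obtain ⟨k, hk⟩ := hdvd2
  have hnM : n ∈ M := by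
    have hk' : n - f c = k * g := by rw [hk]; ring
    have : n = f c + k * g := by omega
    rw [this]
    exact add_mem (hfM c) (by simpa [smul_eq_mul] using nsmul_mem (hTM g hg) k)
  rcases hMT n hnM with rfl | h
  · omega
  · exact h

open Filter in
/-- Convergence theorem for a stochastic matrix on a finite type, some power of which has
all entries bounded below by `ε > 0`. -/
lemma conv_positive {α : Type*} [Fintype α] [Nonempty α] (Q : α → α → ℝ)
    (hQ : IsStochastic Q) (N : ℕ) (hN : 0 < N) (ε : ℝ) (hε : 0 < ε)
    (hpos : ∀ x y, ε ≤ stochPow Q N x y)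
    (μ : α → ℝ) (hμ0 : ∀ x, 0 ≤ μ x) (hμ1 : ∑ x, μ x = 1)
    (hμstat : ∀ y, ∑ x, μ x * Q x y = μ y) (x y : α) :
    Tendsto (fun n => stochPow Q n x y) atTop (nhds (μ y)) := by
  classical
  have hne : (Finset.univ : Finset α).Nonempty := Finset.univ_nonempty
  set A : ℕ → α → ℝ := fun n z => stochPow Q n z y with hA
  set Mx : ℕ → ℝ := fun n => Finset.univ.sup' hne (A n) with hMx
  set mn : ℕ → ℝ := fun n => Finset.univ.inf' hne (A n) with hmn
  have hle : ∀ n z, A n z ≤ Mx n := fun n z => Finset.le_sup' (A n) (Finset.mem_univ z)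
  have hge : ∀ n z, mn n ≤ A n z := fun n z => Finset.inf'_le (A n) (Finset.mem_univ z)
  -- convex combinations stay in [mn, Mx]
  have key : ∀ (w : α → ℝ), (∀ z, 0 ≤ w z) → (∑ z, w z = 1) →
      ∀ n, mn n ≤ ∑ z, w z * A n z ∧ ∑ z, w z * A n z ≤ Mx n := by
    intro w hw0 hw1 n
    constructor
    · calc mn n = ∑ z, w z * mn n := by rw [← Finset.sum_mul, hw1, one_mul]
        _ ≤ ∑ z, w z * A n z :=
          Finset.sum_le_sum fun z _ => mul_le_mul_of_nonneg_left (hge n z) (hw0 z)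
    · calc ∑ z, w z * A n z ≤ ∑ z, w z * Mx n :=
          Finset.sum_le_sum fun z _ => mul_le_mul_of_nonneg_left (hle n z) (hw0 z)
        _ = Mx n := by rw [← Finset.sum_mul, hw1, one_mul]
  have hstep : ∀ k n z, A (k + n) z = ∑ u, stochPow Q k z u * A n u := by
    intro k n z
    exact stochPow_add k n z y
  -- Mx is antitone, mn is monotone (by steps of any size)
  have hMle : ∀ k n, Mx (k + n) ≤ Mx n := by
    intro k n
    apply Finset.sup'_le
    intro z _
    rw [hstep k n z]
    exact (key _ (fun u => stochPow_nonneg hQ k z u) (stochPow_rowsum hQ k z) n).2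
  have hmge : ∀ k n, mn n ≤ mn (k + n) := by
    intro k n
    apply Finset.le_inf'
    intro z _
    rw [hstep k n z]
    exact (key _ (fun u => stochPow_nonneg hQ k z u) (stochPow_rowsum hQ k z) n).1
  have hD0 : ∀ n, 0 ≤ Mx n - mn n := by
    intro n
    obtain ⟨z⟩ := ‹Nonempty α›
    linarith [hle n z, hge n z]
  have hε1 : ε ≤ 1 := by
    obtain ⟨z⟩ := ‹Nonempty α›
    calc ε ≤ stochPow Q N z z := hpos z z
      _ ≤ ∑ u, stochPow Q N z u := Finset.single_le_sum
          (fun u _ => stochPow_nonneg hQ N z u) (Finset.mem_univ z)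
      _ = 1 := stochPow_rowsum hQ N z
  -- contraction
  have hcontr : ∀ n, Mx (N + n) - mn (N + n) ≤ (1 - ε) * (Mx n - mn n) := by
    intro n
    obtain ⟨zmin, _, hzmin⟩ := Finset.exists_mem_eq_inf' hne (A n)
    have hup : ∀ z, A (N + n) z ≤ (1 - ε) * Mx n + ε * mn n := by
      intro z
      rw [hstep N n z]
      set w : α → ℝ := fun u => stochPow Q N z u - if u = zmin then ε else 0 with hw
      have hw0 : ∀ u, 0 ≤ w u := by
        intro u
        show 0 ≤ stochPow Q N z u - if u = zmin then ε else 0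
        by_cases h : u = zmin
        · rw [if_pos h]
          linarith [hpos z u]
        · rw [if_neg h, sub_zero]
          exact stochPow_nonneg hQ N z u
      have hw1 : ∑ u, w u = 1 - ε := by
        simp only [hw, Finset.sum_sub_distrib, stochPow_rowsum hQ N z,
          Finset.sum_ite_eq' Finset.univ zmin (fun _ => ε), Finset.mem_univ, if_pos]
      have hsum : ∑ u, stochPow Q N z u * A n u = (∑ u, w u * A n u) + ε * A n zmin := by
        simp only [hw, sub_mul, Finset.sum_sub_distrib]
        have : ∑ u, (if u = zmin then ε else 0) * A n u = ε * A n zmin := by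
          rw [Finset.sum_eq_single zmin]
          · simp
          · intro b _ hb; simp [hb]
          · intro h; exact absurd (Finset.mem_univ zmin) h
        rw [this]; ring
      rw [hsum]
      have h1 : ∑ u, w u * A n u ≤ (1 - ε) * Mx n := by
        calc ∑ u, w u * A n u ≤ ∑ u, w u * Mx n :=
              Finset.sum_le_sum fun u _ => mul_le_mul_of_nonneg_left (hle n u) (hw0 u)
          _ = (1 - ε) * Mx n := by rw [← Finset.sum_mul, hw1]
      have h2 : ε * A n zmin = ε * mn n := by rw [← hzmin]
      linarith
    have hMup : Mx (N + n) ≤ (1 - ε) * Mx n + ε * mn n :=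
      Finset.sup'_le hne _ fun z _ => hup z
    have := hmge N n
    linarith
  -- D is antitone
  set D : ℕ → ℝ := fun n => Mx n - mn n with hD
  have hDanti : Antitone D := by
    apply antitone_nat_of_succ_le
    intro n
    have h1 : Mx (1 + n) ≤ Mx n := hMle 1 n
    have h2 : mn n ≤ mn (1 + n) := hmge 1 n
    have e : n + 1 = 1 + n := by omega
    simp only [hD, e]
    linarith
  have hgeo : ∀ k, D (k * N) ≤ (1 - ε) ^ k * D 0 := by
    intro k
    induction k with
    | zero => simp [hD]
    | succ k ih =>
      have e : (k + 1) * N = N + k * N := by ring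
      rw [e, pow_succ]
      calc D (N + k * N) ≤ (1 - ε) * D (k * N) := hcontr (k * N)
        _ ≤ (1 - ε) * ((1 - ε) ^ k * D 0) :=
            mul_le_mul_of_nonneg_left ih (by linarith)
        _ = (1 - ε) ^ k * (1 - ε) * D 0 := by ring
  have hDbound : ∀ n, D n ≤ (1 - ε) ^ (n / N) * D 0 := by
    intro n
    calc D n ≤ D (n / N * N) := hDanti (Nat.div_mul_le_self n N)
      _ ≤ (1 - ε) ^ (n / N) * D 0 := hgeo (n / N)
  have hDto0 : Tendsto D atTop (nhds 0) := by
    apply squeeze_zero (fun n => hD0 n) hDbound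
    have h1 : Tendsto (fun k : ℕ => (1 - ε) ^ k * D 0) atTop (nhds 0) := by
      have := (tendsto_pow_atTop_nhds_zero_of_lt_one (by linarith : (0:ℝ) ≤ 1 - ε)
        (by linarith : (1:ℝ) - ε < 1)).mul_const (D 0)
      simpa using this
    exact h1.comp (Nat.tendsto_div_const_atTop hN.ne')
  -- μ is trapped between mn and Mx
  have hstatn : ∀ n z, ∑ x, μ x * stochPow Q n x z = μ z := by
    intro n
    induction n with
    | zero =>
      intro z
      classical
      rw [Finset.sum_eq_single z]
      · simp [stochPow_zero]
      · intro b _ hb; simp [stochPow_zero, hb]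
      · intro h; exact absurd (Finset.mem_univ z) h
    | succ n ih =>
      intro z
      simp only [stochPow_succ, Finset.mul_sum]
      rw [Finset.sum_comm]
      calc ∑ u, ∑ x, μ x * (stochPow Q n x u * Q u z)
          = ∑ u, (∑ x, μ x * stochPow Q n x u) * Q u z := by
            refine Finset.sum_congr rfl fun u _ => ?_
            rw [Finset.sum_mul]
            exact Finset.sum_congr rfl fun x _ => by ring
        _ = ∑ u, μ u * Q u z := by
            refine Finset.sum_congr rfl fun u _ => ?_
            rw [ih u]
        _ = μ z := hμstat z
  have hbet : ∀ n, mn n ≤ μ y ∧ μ y ≤ Mx n := by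
    intro n
    have := key μ hμ0 hμ1 n
    rwa [show ∑ z, μ z * A n z = μ y from hstatn n y] at this
  -- squeeze
  have hnorm : ∀ n, ‖A n x - μ y‖ ≤ D n := by
    intro n
    rw [Real.norm_eq_abs, abs_le]
    have hDn : D n = Mx n - mn n := rfl
    have h1 := hle n x
    have h2 := hge n x
    have h3 := (hbet n).1
    have h4 := (hbet n).2
    constructor <;> linarith
  have : Tendsto (fun n => A n x - μ y) atTop (nhds 0) := squeeze_zero_norm hnorm hDto0
  have h2 := this.add_const (μ y)
  simpa using h2

lemma stat_pow {Ω : Type*} [Fintype Ω] {P : Ω → Ω → ℝ} {π : Ω → ℝ}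
    (hstat : ∀ y, ∑ x, π x * P x y = π y) (n : ℕ) (y : Ω) :
    ∑ x, π x * stochPow P n x y = π y := by
  classical
  induction n generalizing y with
  | zero =>
    rw [Finset.sum_eq_single y]
    · simp [stochPow_zero]
    · intro b _ hb; simp [stochPow_zero, hb]
    · intro h; exact absurd (Finset.mem_univ y) h
  | succ n ih =>
    simp only [stochPow_succ, Finset.mul_sum]
    rw [Finset.sum_comm]
    calc ∑ u, ∑ x, π x * (stochPow P n x u * P u y)
        = ∑ u, (∑ x, π x * stochPow P n x u) * P u y := by
          refine Finset.sum_congr rfl fun u _ => ?_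
          rw [Finset.sum_mul]
          exact Finset.sum_congr rfl fun x _ => by ring
      _ = ∑ u, π u * P u y := by
          refine Finset.sum_congr rfl fun u _ => ?_
          rw [ih u]
      _ = π y := hstat y


open Filter in
/-- convergence theorem for finite irreducible stochastic matrices.  If `π` is the
stationary distribution of the finite irreducible matrix `P` of period `r`, and `i ∈ Ω_{l₁}`,
`j ∈ Ω_{l₂}` are in the indicated cyclic classes (relative to a reference state `ω`), and
`ℓ ≡ l₂ - l₁ (mod r)`, then `(P^{mr+ℓ})_{ij} → π_j · r` as `m → ∞`. -/
theorem convergence_positive_recurrent {Ω : Type*} [Fintype Ω] {P : Ω → Ω → ℝ}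
    (hP : IsStochastic P) (hirr : StochIrreducible P)
    (π : Ω → ℝ) (hπ0 : ∀ i, 0 ≤ π i) (hπ1 : ∑ i, π i = 1)
    (hstat : ∀ j, ∑ i, π i * P i j = π j)
    (ω : Ω) (r : ℕ) (hr0 : 0 < r)
    (hr : IsGCDOf r {n : ℕ | 0 < n ∧ 0 < stochPow P n ω ω})
    (i j : Ω) (l₁ l₂ ℓ : ℕ) (hl₁ : l₁ < r) (hl₂ : l₂ < r) (hℓ : ℓ < r)
    (hi : ∀ n : ℕ, 0 < stochPow P n ω i → n % r = l₁)
    (hj : ∀ n : ℕ, 0 < stochPow P n ω j → n % r = l₂)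
    (hmod : (l₁ + ℓ) % r = l₂) :
    Tendsto (fun m : ℕ => stochPow P (m * r + ℓ) i j) atTop (nhds (π j * r)) := by
  classical
  -- reachability and class function
  have reach : ∀ x : Ω, ∃ n, 0 < stochPow P n ω x := fun x => (hirr ω x).1
  choose f hf using reach
  have hret : ∀ n, 0 < stochPow P n ω ω → r ∣ n := by
    intro n hn
    rcases Nat.eq_zero_or_pos n with rfl | h
    · exact dvd_zero r
    · exact hr.1 n ⟨h, hn⟩
  set cls : Ω → ℕ := fun x => f x % r with hcls
  have cls_lt : ∀ x, cls x < r := fun x => Nat.mod_lt _ hr0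
  have cls_spec : ∀ x n, 0 < stochPow P n ω x → n % r = cls x := by
    intro x n hn
    obtain ⟨k, hk⟩ := (hirr x ω).1
    have h1 : 0 < stochPow P (n + k) ω ω :=
      lt_of_lt_of_le (mul_pos hn hk) (le_stochPow_add hP n k ω x ω)
    have h2 : 0 < stochPow P (f x + k) ω ω :=
      lt_of_lt_of_le (mul_pos (hf x) hk) (le_stochPow_add hP (f x) k ω x ω)
    have d1 := (Nat.modEq_zero_iff_dvd).mpr (hret _ h1)
    have d2 := (Nat.modEq_zero_iff_dvd).mpr (hret _ h2)
    exact Nat.ModEq.add_right_cancel' k (d1.trans d2.symm)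
  have cls_add : ∀ x z b, 0 < stochPow P b x z → cls z = (cls x + b) % r := by
    intro x z b hb
    have h1 : 0 < stochPow P (f x + b) ω z :=
      lt_of_lt_of_le (mul_pos (hf x) hb) (le_stochPow_add hP (f x) b ω x z)
    have h2 := cls_spec z _ h1
    rw [← h2]
    exact (Nat.ModEq.add_right b (Nat.mod_modEq (f x) r)).symm
  have cls_i : cls i = l₁ := by
    have := cls_spec i (f i) (hf i)
    rw [← this]; exact hi (f i) (hf i)
  have cls_j : cls j = l₂ := by
    have := cls_spec j (f j) (hf j)
    rw [← this]; exact hj (f j) (hf j)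
  -- the cyclic class of j, as a subtype
  set p : Ω → Prop := fun z => cls z = l₂ with hp
  let α := {z : Ω // p z}
  haveI : Nonempty α := ⟨⟨j, cls_j⟩⟩
  -- vanishing of r-step transitions leaving the class
  have hvanish : ∀ (x : Ω) (y : α), cls x ≠ l₂ → stochPow P r x y.1 = 0 := by
    intro x y hx
    by_contra h
    have hpos : 0 < stochPow P r x y.1 :=
      lt_of_le_of_ne (stochPow_nonneg hP r x y.1) (Ne.symm h)
    have := cls_add x y.1 r hpos
    rw [Nat.add_mod_right, Nat.mod_eq_of_lt (cls_lt x)] at this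
    exact hx (this ▸ y.2)
  have hvanish' : ∀ (x : α) (z : Ω), cls z ≠ l₂ → stochPow P r x.1 z = 0 := by
    intro x z hz
    by_contra h
    have hpos : 0 < stochPow P r x.1 z :=
      lt_of_le_of_ne (stochPow_nonneg hP r x.1 z) (Ne.symm h)
    have := cls_add x.1 z r hpos
    rw [x.2, Nat.add_mod_right, Nat.mod_eq_of_lt hl₂] at this
    exact hz this
  -- sums over the subtype versus sums over Ω
  have hsum_sub : ∀ g : Ω → ℝ, (∀ z, cls z ≠ l₂ → g z = 0) →
      ∑ x : α, g x.1 = ∑ z, g z := by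
    intro g hg
    rw [← Finset.sum_filter_of_ne (fun z _ hz => by_contra fun hc => hz (hg z hc))]
    exact (Finset.sum_subtype (Finset.univ.filter p) (fun z => by simp [p]) g).symm
  -- the r-step matrix on the class
  set Q : α → α → ℝ := fun x y => stochPow P r x.1 y.1 with hQ
  have hQstoch : IsStochastic Q := by
    constructor
    · intro x y; exact stochPow_nonneg hP r x.1 y.1
    · intro x
      have : ∑ y : α, Q x y = 1 := by
        rw [hsum_sub (fun z => stochPow P r x.1 z) (hvanish' x)]
        exact stochPow_rowsum hP r x.1
      exact this ▸ hasSum_fintype fun y => Q x y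
  -- powers of Q are powers of P
  have hQpow : ∀ n (x y : α), stochPow Q n x y = stochPow P (n * r) x.1 y.1 := by
    intro n
    induction n with
    | zero =>
      intro x y
      rw [Nat.zero_mul, stochPow_zero, stochPow_zero]
      by_cases h : x = y
      · rw [if_pos h, if_pos (congrArg Subtype.val h)]
      · rw [if_neg h, if_neg (fun hv => h (Subtype.ext hv))]
    | succ n ih =>
      intro x y
      rw [stochPow_succ, show (n+1)*r = n*r + r by ring, stochPow_add]
      rw [← hsum_sub (fun z => stochPow P (n*r) x.1 z * stochPow P r z y.1)
        (fun z hz => by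
          show stochPow P (n*r) x.1 z * stochPow P r z y.1 = 0
          rw [hvanish z y hz, mul_zero])]
      exact Finset.sum_congr rfl fun z _ => by rw [ih x z]
  -- the set of (positive) return times to ω, divided by r
  set T : Set ℕ := {m : ℕ | 0 < m ∧ 0 < stochPow P (m * r) ω ω} with hT
  have hTadd : ∀ a ∈ T, ∀ b ∈ T, a + b ∈ T := by
    rintro a ⟨ha0, ha⟩ b ⟨hb0, hb⟩
    refine ⟨by omega, ?_⟩
    rw [show (a + b) * r = a * r + b * r by ring]
    exact lt_of_lt_of_le (mul_pos ha hb) (le_stochPow_add hP (a*r) (b*r) ω ω ω)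
  -- a positive return time exists
  have hex : ∃ s : ℕ, 0 < s ∧ 0 < stochPow P s ω ω := by
    have : ∃ x, 0 < P ω x := by
      by_contra h
      push_neg at h
      have : ∀ x, P ω x = 0 := fun x => le_antisymm (h x) (hP.1 ω x)
      have hsum := rowsum_one hP ω
      rw [Finset.sum_congr rfl (fun x _ => this x)] at hsum
      simp at hsum
    obtain ⟨x, hx⟩ := this
    obtain ⟨c, hc⟩ := (hirr x ω).1
    refine ⟨1 + c, by omega, ?_⟩
    have h1 : 0 < stochPow P 1 ω x := by rwa [stochPow_one]
    exact lt_of_lt_of_le (mul_pos h1 hc) (le_stochPow_add hP 1 c ω x ω)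
  obtain ⟨s, hs0, hs⟩ := hex
  have hrs : r ∣ s := hret s hs
  have hgT : s / r ∈ T := by
    refine ⟨Nat.div_pos (Nat.le_of_dvd hs0 hrs) hr0, ?_⟩
    rwa [Nat.div_mul_cancel hrs]
  have hgcdT : ∀ e : ℕ, (∀ n ∈ T, e ∣ n) → e ∣ 1 := by
    intro e he
    have her : e * r ∣ r := by
      apply hr.2
      rintro n ⟨hn0, hn⟩
      have hrn : r ∣ n := hret n hn
      have : n / r ∈ T := ⟨Nat.div_pos (Nat.le_of_dvd hn0 hrn) hr0, by rwa [Nat.div_mul_cancel hrn]⟩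
      obtain ⟨k, hk⟩ := he _ this
      exact ⟨k, by rw [← Nat.div_mul_cancel hrn, hk]; ring⟩
    have := (Nat.mul_dvd_mul_iff_right hr0).mp (by rwa [one_mul] : e * r ∣ 1 * r)
    exact this
  obtain ⟨N₀, hN₀⟩ := numerical_semigroup T hTadd (s / r) hgT hgT.1 hgcdT
  -- paths to and from ω for points of the class
  choose a ha using fun x : α => (hirr x.1 ω).1
  -- for x in the class, r divides a x + f y for any y in the class
  have hdivk : ∀ x y : α, r ∣ a x + f y.1 := by
    intro x y
    have h1 : 0 < stochPow P (f x.1 + a x) ω ω :=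
      lt_of_lt_of_le (mul_pos (hf x.1) (ha x)) (le_stochPow_add hP (f x.1) (a x) ω x.1 ω)
    have d1 : r ∣ f x.1 + a x := hret _ h1
    have hxy : f x.1 % r = f y.1 % r := by
      show cls x.1 = cls y.1
      rw [x.2, y.2]
    have : (a x + f y.1) % r = (f x.1 + a x) % r := by
      conv_rhs => rw [Nat.add_comm]
      exact Nat.ModEq.add_left (a x) hxy.symm
    rw [Nat.dvd_iff_mod_eq_zero] at d1 ⊢
    rw [this, d1]
  set k : α → α → ℕ := fun x y => (a x + f y.1) / r with hk
  -- uniform positivity time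
  set N : ℕ := N₀ + 1 + Finset.univ.sup (fun q : α × α => k q.1 q.2) with hN
  have hN1 : 0 < N := by omega
  have hNpos : ∀ x y : α, 0 < stochPow P (N * r) x.1 y.1 := by
    intro x y
    have hkN : k x y ≤ Finset.univ.sup (fun q : α × α => k q.1 q.2) :=
      Finset.le_sup (f := fun q : α × α => k q.1 q.2) (Finset.mem_univ (x, y))
    set m : ℕ := N - k x y with hm
    have hmN₀ : N₀ ≤ m := by omega
    have hdecomp : N * r = a x + (m * r + f y.1) := by
      have h1 : k x y * r = a x + f y.1 := Nat.div_mul_cancel (hdivk x y)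
      have h2 : N = m + k x y := by omega
      calc N * r = m * r + k x y * r := by rw [h2]; ring
        _ = a x + (m * r + f y.1) := by rw [h1]; ring
    rw [hdecomp]
    have hm' : 0 < stochPow P (m * r) ω ω := (hN₀ m hmN₀).2
    have h2 : 0 < stochPow P (m * r + f y.1) ω y.1 :=
      lt_of_lt_of_le (mul_pos hm' (hf y.1)) (le_stochPow_add hP (m*r) (f y.1) ω ω y.1)
    exact lt_of_lt_of_le (mul_pos (ha x) h2) (le_stochPow_add hP (a x) (m*r + f y.1) x.1 ω y.1)
  -- the ε lower bound
  haveI : Nonempty (α × α) := inferInstance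
  set ε : ℝ := Finset.univ.inf' Finset.univ_nonempty
    (fun q : α × α => stochPow P (N * r) q.1.1 q.2.1) with hε
  have hε0 : 0 < ε := by
    rw [hε]
    apply (Finset.lt_inf'_iff _).mpr
    intro q _
    exact hNpos q.1 q.2
  have hεle : ∀ x y : α, ε ≤ stochPow Q N x y := by
    intro x y
    rw [hQpow N x y]
    exact Finset.inf'_le _ (Finset.mem_univ (x, y))
  -- the mass of each cyclic class is 1/r
  set mass : ℕ → ℝ := fun c => ∑ x ∈ Finset.univ.filter (fun x => cls x = c), π x with hmass
  have hstep : ∀ c, c < r → mass ((c+1) % r) = mass c := by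
    intro c hc
    have inner : ∀ x, ∑ y ∈ Finset.univ.filter (fun y => cls y = (c+1) % r), P x y
        = if cls x = c then 1 else 0 := by
      intro x
      by_cases hx : cls x = c
      · rw [if_pos hx]
        rw [Finset.sum_filter_of_ne]
        · exact rowsum_one hP x
        · intro y _ hy
          have hpos : 0 < P x y := lt_of_le_of_ne (hP.1 x y) (Ne.symm hy)
          have h1 : 0 < stochPow P 1 x y := by rwa [stochPow_one]
          have := cls_add x y 1 h1
          rw [this, hx]
      · rw [if_neg hx]
        apply Finset.sum_eq_zero
        intro y hy
        rw [Finset.mem_filter] at hy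
        by_contra hPxy
        have hpos : 0 < P x y := lt_of_le_of_ne (hP.1 x y) (Ne.symm hPxy)
        have h1 : 0 < stochPow P 1 x y := by rwa [stochPow_one]
        have h2 := cls_add x y 1 h1
        rw [hy.2] at h2
        have : cls x % r = c % r := Nat.ModEq.add_right_cancel' 1 h2.symm
        rw [Nat.mod_eq_of_lt (cls_lt x), Nat.mod_eq_of_lt hc] at this
        exact hx this
    have expand : mass ((c+1) % r)
        = ∑ x, π x * ∑ y ∈ Finset.univ.filter (fun y => cls y = (c+1) % r), P x y := by
      rw [hmass]
      simp only [Finset.mul_sum]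
      rw [Finset.sum_comm]
      exact Finset.sum_congr rfl fun y _ => (hstat y).symm
    rw [expand]
    calc ∑ x, π x * ∑ y ∈ Finset.univ.filter (fun y => cls y = (c+1) % r), P x y
        = ∑ x, (if cls x = c then π x else 0) := by
          refine Finset.sum_congr rfl fun x _ => ?_
          rw [inner x]
          by_cases hx : cls x = c
          · rw [if_pos hx, if_pos hx, mul_one]
          · rw [if_neg hx, if_neg hx, mul_zero]
      _ = mass c := (Finset.sum_filter _ _).symm
  have masseq : ∀ c, c < r → mass c = mass 0 := by
    intro c
    induction c with
    | zero => intro _; rfl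
    | succ c ih =>
      intro hc
      have hc' : c < r := by omega
      have := hstep c hc'
      rw [Nat.mod_eq_of_lt hc] at this
      rw [this, ih hc']
  have hmass_sum : ∑ c ∈ Finset.range r, mass c = 1 := by
    rw [hmass, ← hπ1]
    exact Finset.sum_fiberwise_of_maps_to (fun x _ => Finset.mem_range.mpr (cls_lt x)) π
  have hmass0 : (r : ℝ) * mass 0 = 1 := by
    rw [← hmass_sum]
    rw [Finset.sum_congr rfl (fun c hc => masseq c (Finset.mem_range.mp hc))]
    simp [mul_comm]
  -- the stationary distribution on the class
  set μ : α → ℝ := fun x => π x.1 * r with hμ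
  have hμ0 : ∀ x : α, 0 ≤ μ x := fun x => mul_nonneg (hπ0 x.1) (Nat.cast_nonneg r)
  have hμ1 : ∑ x : α, μ x = 1 := by
    have h1 : ∑ x : α, π x.1 = mass l₂ := by
      rw [hmass]
      exact (Finset.sum_subtype (Finset.univ.filter p) (fun z => by simp [p]) π).symm
    calc ∑ x : α, μ x = (∑ x : α, π x.1) * r := by rw [Finset.sum_mul]
      _ = mass l₂ * r := by rw [h1]
      _ = mass 0 * r := by rw [masseq l₂ hl₂]
      _ = 1 := by rw [mul_comm]; exact hmass0
  have hμstat : ∀ y : α, ∑ x : α, μ x * Q x y = μ y := by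
    intro y
    have h1 : ∑ x : α, π x.1 * stochPow P r x.1 y.1 = π y.1 := by
      rw [hsum_sub (fun z => π z * stochPow P r z y.1)
        (fun z hz => by
          show π z * stochPow P r z y.1 = 0
          rw [hvanish z y hz, mul_zero])]
      exact stat_pow hstat r y.1
    calc ∑ x : α, μ x * Q x y = (∑ x : α, π x.1 * stochPow P r x.1 y.1) * r := by
          rw [Finset.sum_mul]
          exact Finset.sum_congr rfl fun x _ => by show π x.1 * r * Q x y = _; ring
      _ = π y.1 * r := by rw [h1]
  -- apply the convergence lemma
  have hconv : ∀ x y : α, Tendsto (fun n => stochPow P (n * r) x.1 y.1) atTop (nhds (π y.1 * r)) := by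
    intro x y
    have := conv_positive Q hQstoch N hN1 ε hε0 hεle μ hμ0 hμ1 hμstat x y
    refine this.congr fun n => ?_
    exact hQpow n x y
  -- final glue
  set jα : α := ⟨j, cls_j⟩ with hjα
  have hterm : ∀ z : Ω, Tendsto (fun m : ℕ => stochPow P ℓ i z * stochPow P (m * r) z j)
      atTop (nhds (stochPow P ℓ i z * (π j * r))) := by
    intro z
    by_cases hz : 0 < stochPow P ℓ i z
    · have hclsz : cls z = l₂ := by
        have := cls_add i z ℓ hz
        rw [cls_i, hmod] at this
        exact this
      exact (hconv ⟨z, hclsz⟩ jα).const_mul _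
    · have h0 : stochPow P ℓ i z = 0 :=
        le_antisymm (not_lt.mp hz) (stochPow_nonneg hP ℓ i z)
      rw [h0]
      simpa using tendsto_const_nhds
  have hsumlim : Tendsto (fun m : ℕ => ∑ z, stochPow P ℓ i z * stochPow P (m * r) z j)
      atTop (nhds (∑ z, stochPow P ℓ i z * (π j * r))) :=
    tendsto_finset_sum _ fun z _ => hterm z
  have hfinal : ∑ z, stochPow P ℓ i z * (π j * r) = π j * r := by
    rw [← Finset.sum_mul, stochPow_rowsum hP ℓ i, one_mul]
  rw [hfinal] at hsumlim
  refine hsumlim.congr fun m => ?_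
  rw [← stochPow_add, Nat.add_comm]
end
end

section
/- Let T be a Moebius automorphism of the closed unit disc. Then there exist λ, θ ∈ 𝕋 (unit circle) such that T(θ · T^{−1}(λ · T(0))) = 0. -/
/-- The Moebius automorphism `z ↦ α (z - w)/(1 - w̄ z)` of the (closed) unit disc,
for `|α| = 1` and `|w| < 1`. -/
noncomputable def moebius (α w z : ℂ) : ℂ :=
  α * (z - w) / (1 - (starRingEnd ℂ) w * z)

/-- The inverse Moebius transformation of `moebius α w`. -/
noncomputable def moebiusInv (α w z : ℂ) : ℂ :=
  (z / α + w) / (1 + (starRingEnd ℂ) w * (z / α))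

/-- for every Moebius automorphism `T` of the closed unit disc there are
unimodular `λ, θ` with `T (θ · T⁻¹(λ · T 0)) = 0`. -/
theorem moebius_rotation_fixes_origin (α w : ℂ) (hα : ‖α‖ = 1) (hw : ‖w‖ < 1) :
    ∃ lam θ : ℂ, ‖lam‖ = 1 ∧ ‖θ‖ = 1 ∧
      moebius α w (θ * moebiusInv α w (lam * moebius α w 0)) = 0 := by
  by_cases hw0 : w = 0
  · exact ⟨1, 1, by norm_num, by norm_num, by subst hw0; simp [moebius, moebiusInv]⟩
  have hα0 : α ≠ 0 := by
    intro h; rw [h] at hα; simp at hα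
  set r : ℝ := ‖w‖ with hr
  have hr0 : 0 < r := norm_pos_iff.mpr hw0
  have hr1 : r < 1 := hw
  set x : ℝ := (1 + r ^ 2) / 2 with hx
  have hx0 : 0 < x := by positivity
  have hx1 : x < 1 := by nlinarith
  set y : ℝ := Real.sqrt (1 - x ^ 2) with hy
  have hy2 : y ^ 2 = 1 - x ^ 2 := Real.sq_sqrt (by nlinarith)
  have hy0 : 0 < y := Real.sqrt_pos.mpr (by nlinarith)
  set lam : ℂ := ⟨x, y⟩ with hlamdef
  have hlamnorm : ‖lam‖ = 1 := by
    have : Complex.normSq lam = 1 := by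
      rw [hlamdef, Complex.normSq_mk]; nlinarith
    rw [Complex.norm_def, this, Real.sqrt_one]
  have hlam1 : (1 : ℂ) - lam ≠ 0 := by
    intro h
    have := congrArg Complex.im h
    simp [hlamdef] at this
    linarith
  -- the denominator 1 - lam * r^2
  have hden : (1 : ℂ) - lam * (r ^ 2 : ℝ) ≠ 0 := by
    intro h
    have h1 : ‖lam * ((r ^ 2 : ℝ) : ℂ)‖ = r ^ 2 := by
      rw [norm_mul, hlamnorm, one_mul, Complex.norm_real, Real.norm_eq_abs,
        abs_of_nonneg (by positivity)]
    have h2 : lam * ((r ^ 2 : ℝ) : ℂ) = 1 := by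
      have := sub_eq_zero.mp h
      linear_combination -this
    rw [h2] at h1
    simp at h1
    nlinarith
  -- conj w * w = r^2
  have hconj : (starRingEnd ℂ) w * w = ((r ^ 2 : ℝ) : ℂ) := by
    rw [mul_comm, Complex.mul_conj, hr]
    norm_cast
    rw [Complex.normSq_eq_norm_sq]
  -- compute moebius α w 0
  have hT0 : moebius α w 0 = -(α * w) := by
    simp [moebius]
  -- compute z₀
  set z₀ : ℂ := w * (1 - lam) / (1 - lam * ((r ^ 2 : ℝ) : ℂ)) with hz0
  have hinv : moebiusInv α w (lam * moebius α w 0) = z₀ := by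
    rw [hT0, moebiusInv, hz0]
    have h1 : lam * -(α * w) / α = -(lam * w) := by
      field_simp
    rw [h1]
    have h2 : (1 : ℂ) + (starRingEnd ℂ) w * -(lam * w) = 1 - lam * ((r ^ 2 : ℝ) : ℂ) := by
      rw [← hconj]; ring
    rw [h2]
    congr 1
    ring
  have hz0ne : z₀ ≠ 0 := by
    rw [hz0]
    exact div_ne_zero (mul_ne_zero hw0 hlam1) hden
  -- norm of z₀ equals r
  have hnum : ‖(1 : ℂ) - lam‖ ^ 2 = 2 - 2 * x := by
    rw [Complex.sq_norm, Complex.normSq_apply]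
    simp [hlamdef]
    nlinarith
  have hden2 : ‖(1 : ℂ) - lam * ((r ^ 2 : ℝ) : ℂ)‖ ^ 2 = 2 - 2 * x := by
    rw [Complex.sq_norm, Complex.normSq_apply]
    simp [hlamdef, Complex.ext_iff, ← Complex.ofReal_pow]
    linear_combination r ^ 2 * r ^ 2 * hy2 + (2 - 2 * r ^ 2) * hx
  have hz0norm : ‖z₀‖ = r := by
    rw [hz0, norm_div, norm_mul, ← hr]
    have hdn : ‖(1 : ℂ) - lam * ((r ^ 2 : ℝ) : ℂ)‖ ≠ 0 := norm_ne_zero_iff.mpr hden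
    have : ‖(1 : ℂ) - lam‖ = ‖(1 : ℂ) - lam * ((r ^ 2 : ℝ) : ℂ)‖ := by
      have h1 : ‖(1 : ℂ) - lam‖ ^ 2 = ‖(1 : ℂ) - lam * ((r ^ 2 : ℝ) : ℂ)‖ ^ 2 := by
        rw [hnum, hden2]
      nlinarith [norm_nonneg ((1 : ℂ) - lam), norm_nonneg ((1 : ℂ) - lam * ((r ^ 2 : ℝ) : ℂ))]
    rw [this, mul_div_assoc, div_self hdn, mul_one]
  refine ⟨lam, w / z₀, hlamnorm, ?_, ?_⟩
  · rw [norm_div, hz0norm, ← hr, div_self (ne_of_gt hr0)]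
  · rw [hinv, div_mul_cancel₀ _ hz0ne]
    simp [moebius]
end

section
/- Let P, Q be stochastic matrices over Ω and σ a permutation of Ω such that the directed graphs of P and Q are isomorphic via σ and for all n, m ≥ 1 and all triples (i,j,k) with (P^n)_{ij}(P^m)_{jk} > 0 one has (P^n)_{ij}(P^m)_{jk} / (P^{n+m})_{ik} = (Q^n)_{σ(i)σ(j)}(Q^m)_{σ(j)σ(k)} / (Q^{n+m})_{σ(i)σ(k)}. If P and Q are recurrent, then P and Q are isomorphic as weighted graphs via σ, i.e., P_{ij} = Q_{σ(i)σ(j)} for all i, j. -/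
namespace StochAux

variable {Ω : Type*} {P : Ω → Ω → ℝ}

theorem rowSummable (hP : IsStochastic P) (i : Ω) : Summable (fun j => P i j) :=
  (hP.2 i).summable

theorem rowTsum (hP : IsStochastic P) (i : Ω) : ∑' j, P i j = 1 :=
  (hP.2 i).tsum_eq

theorem entry_le_one (hP : IsStochastic P) (i j : Ω) : P i j ≤ 1 := by
  have h := Summable.le_tsum (rowSummable hP i) j (fun k _ => hP.1 i k)
  rwa [rowTsum hP i] at h

/-- powers are stochastic -/
theorem pow_stochastic (hP : IsStochastic P) (n : ℕ) : IsStochastic (stochPow P n) := by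
  induction n with
  | zero =>
    constructor
    · intro i j; simp only [stochPow]; split <;> norm_num
    · intro i
      classical
      have : (fun j => stochPow P 0 i j) = fun j => if j = i then (1:ℝ) else 0 := by
        funext j; simp only [stochPow]
        by_cases h : i = j
        · subst h; simp
        · rw [if_neg h, if_neg (fun hji => h hji.symm)]
      rw [this]
      simpa using hasSum_ite_eq i (1:ℝ)
  | succ n ih =>
    have hnn : ∀ i j, 0 ≤ stochPow P (n+1) i j := by
      intro i j
      exact tsum_nonneg (fun k => mul_nonneg (ih.1 i k) (hP.1 k j))
    refine ⟨hnn, ?_⟩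
    intro i
    -- row sum of stochPow P (n+1) i = ∑' k, ∑' j, P^n i j * P j k
    have hsumj : ∀ j, Summable (fun k => stochPow P n i j * P j k) :=
      fun j => (rowSummable hP j).mul_left _
    have hjt : ∀ j, ∑' k, stochPow P n i j * P j k = stochPow P n i j := by
      intro j; rw [tsum_mul_left, rowTsum hP j, mul_one]
    have hunc : Summable (Function.uncurry (fun j k => stochPow P n i j * P j k)) := by
      rw [summable_prod_of_nonneg]
      · refine ⟨fun j => hsumj j, ?_⟩
        have : (fun j => ∑' k, (Function.uncurry (fun j k => stochPow P n i j * P j k)) (j, k))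
            = fun j => stochPow P n i j := by
          funext j; exact hjt j
        rw [this]; exact (ih.2 i).summable
      · intro ⟨j, k⟩; exact mul_nonneg (ih.1 i j) (hP.1 j k)
    have hsumk : ∀ k, Summable (fun j => stochPow P n i j * P j k) := by
      intro k
      exact Summable.of_nonneg_of_le (fun j => mul_nonneg (ih.1 i j) (hP.1 j k))
        (fun j => mul_le_of_le_one_right (ih.1 i j) (entry_le_one hP j k)) (ih.2 i).summable
    have hswap : ∑' k, ∑' j, stochPow P n i j * P j k
        = ∑' j, ∑' k, stochPow P n i j * P j k :=
      Summable.tsum_comm' hunc hsumj hsumk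
    have hrow : ∑' k, stochPow P (n+1) i k = 1 := by
      have : (fun k => stochPow P (n+1) i k) = fun k => ∑' j, stochPow P n i j * P j k := rfl
      rw [this, hswap]
      calc ∑' j, ∑' k, stochPow P n i j * P j k = ∑' j, stochPow P n i j := by
            exact tsum_congr hjt
        _ = 1 := rowTsum ⟨ih.1, ih.2⟩ i
    have hsummable : Summable (fun k => stochPow P (n+1) i k) := by
      have h2 : Summable fun k => ∑' j, stochPow P n i j * P j k := by
        refine (summable_prod_of_nonneg ?_).1 hunc.prod_symm |>.2
        intro ⟨k, j⟩; exact mul_nonneg (ih.1 i j) (hP.1 j k)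
      exact h2
    exact hsummable.hasSum_iff.2 hrow

theorem pow_nonneg (hP : IsStochastic P) (n : ℕ) (i j : Ω) : 0 ≤ stochPow P n i j :=
  (pow_stochastic hP n).1 i j

theorem pow_le_one (hP : IsStochastic P) (n : ℕ) (i j : Ω) : stochPow P n i j ≤ 1 :=
  entry_le_one (pow_stochastic hP n) i j

theorem pow_zero_diag (i : Ω) : stochPow P 0 i i = 1 := by simp [stochPow]

theorem chapman (hP : IsStochastic P) (n m : ℕ) (i k : Ω) :
    stochPow P (n + m) i k = ∑' j, stochPow P n i j * stochPow P m j k := by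
  induction m generalizing k with
  | zero =>
    classical
    rw [Nat.add_zero, tsum_eq_single k]
    · simp [stochPow]
    · intro j hj
      have : stochPow P 0 j k = 0 := by
        simp only [stochPow]; rw [if_neg hj]
      rw [this, mul_zero]
  | succ m ih =>
    have key : ∀ j, Summable (fun l => stochPow P m j l * P l k) := fun j =>
      Summable.of_nonneg_of_le
        (fun l => mul_nonneg (pow_nonneg hP m j l) (hP.1 l k))
        (fun l => mul_le_of_le_one_right (pow_nonneg hP m j l) (entry_le_one hP l k))
        (rowSummable (pow_stochastic hP m) j)
    have h1 : stochPow P (n + (m+1)) i k = ∑' l, stochPow P (n+m) i l * P l k := rfl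
    rw [h1]
    have h2 : ∀ l, stochPow P (n+m) i l * P l k
        = ∑' j, stochPow P n i j * stochPow P m j l * P l k := by
      intro l; rw [ih l, ← tsum_mul_right]
    rw [tsum_congr h2]
    -- now swap sums
    have F : Ω → Ω → ℝ := fun j l => stochPow P n i j * stochPow P m j l * P l k
    have hnnF : ∀ j l, 0 ≤ stochPow P n i j * stochPow P m j l * P l k := fun j l =>
      mul_nonneg (mul_nonneg (pow_nonneg hP n i j) (pow_nonneg hP m j l)) (hP.1 l k)
    have hsum_l : ∀ j, Summable (fun l => stochPow P n i j * stochPow P m j l * P l k) := by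
      intro j
      have := (key j).mul_left (stochPow P n i j)
      simpa [mul_assoc] using this
    have htsum_l : ∀ j, ∑' l, stochPow P n i j * stochPow P m j l * P l k
        = stochPow P n i j * stochPow P (m+1) j k := by
      intro j
      have : ∀ l, stochPow P n i j * stochPow P m j l * P l k
          = stochPow P n i j * (stochPow P m j l * P l k) := fun l => mul_assoc _ _ _
      rw [tsum_congr this, tsum_mul_left]
      rfl
    have hunc : Summable (Function.uncurry
        (fun j l => stochPow P n i j * stochPow P m j l * P l k)) := by
      rw [summable_prod_of_nonneg (by intro ⟨j, l⟩; exact hnnF j l)]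
      refine ⟨hsum_l, ?_⟩
      have : (fun j => ∑' l, (Function.uncurry
          (fun j l => stochPow P n i j * stochPow P m j l * P l k)) (j, l))
          = fun j => stochPow P n i j * stochPow P (m+1) j k := by
        funext j; exact htsum_l j
      rw [this]
      exact Summable.of_nonneg_of_le
        (fun j => mul_nonneg (pow_nonneg hP n i j) (pow_nonneg hP (m+1) j k))
        (fun j => mul_le_of_le_one_right (pow_nonneg hP n i j) (pow_le_one hP (m+1) j k))
        (rowSummable (pow_stochastic hP n) i)
    have hsum_j : ∀ l, Summable (fun j => stochPow P n i j * stochPow P m j l * P l k) := by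
      intro l
      have : Summable (fun j => stochPow P n i j * stochPow P m j l) :=
        Summable.of_nonneg_of_le
          (fun j => mul_nonneg (pow_nonneg hP n i j) (pow_nonneg hP m j l))
          (fun j => mul_le_of_le_one_right (pow_nonneg hP n i j) (pow_le_one hP m j l))
          (rowSummable (pow_stochastic hP n) i)
      simpa using this.mul_right (P l k)
    calc ∑' l, ∑' j, stochPow P n i j * stochPow P m j l * P l k
        = ∑' j, ∑' l, stochPow P n i j * stochPow P m j l * P l k :=
          Summable.tsum_comm' hunc hsum_l hsum_j
      _ = ∑' j, stochPow P n i j * stochPow P (m+1) j k := tsum_congr htsum_l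

theorem chapman_le (hP : IsStochastic P) (n m : ℕ) (i j k : Ω) :
    stochPow P n i j * stochPow P m j k ≤ stochPow P (n + m) i k := by
  rw [chapman hP n m i k]
  have hs : Summable (fun j => stochPow P n i j * stochPow P m j k) :=
    Summable.of_nonneg_of_le
      (fun j => mul_nonneg (pow_nonneg hP n i j) (pow_nonneg hP m j k))
      (fun j => mul_le_of_le_one_right (pow_nonneg hP n i j) (pow_le_one hP m j k))
      (rowSummable (pow_stochastic hP n) i)
  exact Summable.le_tsum hs j (fun l _ => mul_nonneg (pow_nonneg hP n i l) (pow_nonneg hP m l k))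

theorem pow_pos_decomp (hP : IsStochastic P) {n m : ℕ} {i k : Ω}
    (h : 0 < stochPow P (n + m) i k) : ∃ j, 0 < stochPow P n i j ∧ 0 < stochPow P m j k := by
  by_contra hc
  push_neg at hc
  have hz : ∀ j, stochPow P n i j * stochPow P m j k = 0 := by
    intro j
    rcases lt_or_eq_of_le (pow_nonneg hP n i j) with hpos | heq
    · have := hc j hpos
      have h0 : stochPow P m j k = 0 :=
        le_antisymm this (pow_nonneg hP m j k)
      rw [h0, mul_zero]
    · rw [← heq, zero_mul]
  rw [chapman hP n m i k, tsum_congr hz, tsum_zero] at h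
  exact lt_irrefl 0 h

theorem pow_pos_comp (hP : IsStochastic P) {n m : ℕ} {i k : Ω} (j : Ω)
    (h1 : 0 < stochPow P n i j) (h2 : 0 < stochPow P m j k) : 0 < stochPow P (n + m) i k :=
  lt_of_lt_of_le (mul_pos h1 h2) (chapman_le hP n m i j k)

theorem pow_one' (hP : IsStochastic P) (i j : Ω) : stochPow P 1 i j = P i j := by
  classical
  have : stochPow P 1 i j = ∑' l, stochPow P 0 i l * P l j := rfl
  rw [this, tsum_eq_single i]
  · simp [stochPow]
  · intro l hl
    have : stochPow P 0 i l = 0 := by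
      simp only [stochPow]; rw [if_neg (fun h => hl h.symm)]
    rw [this, zero_mul]

/-- abstract sequence comparison lemma -/
theorem seq_eq (p q : ℕ → ℝ) (hp : ∀ n, 0 ≤ p n) (hq : ∀ n, 0 ≤ q n)
    (hp1 : ∀ n, p n ≤ 1) (hq1 : ∀ n, q n ≤ 1) (h0 : p 0 = q 0)
    (hsupp : ∀ n, 0 < p n ↔ 0 < q n)
    (hmul : ∀ n m, 1 ≤ n → 1 ≤ m → 0 < p n → 0 < p m →
      p n * p m * q (n+m) = q n * q m * p (n+m))
    (hsub : ∀ n m, p n * p m ≤ p (n + m))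
    (hrecp : ¬ Summable p) (hrecq : ¬ Summable q) : ∀ n, p n = q n := by
  -- ρ n = q n / p n
  set ρ : ℕ → ℝ := fun n => q n / p n with hρ
  have hsubpos : ∀ {n m : ℕ}, 0 < p n → 0 < p m → 0 < p (n+m) :=
    fun hn hm => lt_of_lt_of_le (mul_pos hn hm) (hsub _ _)
  have hρpos : ∀ {n : ℕ}, 0 < p n → 0 < ρ n := fun {n} hn =>
    div_pos ((hsupp n).1 hn) hn
  have hρmul : ∀ n m, 1 ≤ n → 1 ≤ m → 0 < p n → 0 < p m → ρ (n+m) = ρ n * ρ m := by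
    intro n m hn hm hpn hpm
    have hpnm := hsubpos hpn hpm
    have h := hmul n m hn hm hpn hpm
    simp only [hρ]
    rw [div_mul_div_comm, div_eq_div_iff (ne_of_gt hpnm) (mul_ne_zero (ne_of_gt hpn) (ne_of_gt hpm))]
    linear_combination h
  -- powers along multiples
  have hppow : ∀ (a : ℕ), 0 < p a → ∀ k : ℕ, 0 < p ((k+1)*a) := by
    intro a ha k
    induction k with
    | zero => simpa using ha
    | succ k ih =>
      have : (k+2)*a = (k+1)*a + a := by ring
      rw [this]; exact hsubpos ih ha
  have hρpow : ∀ (a : ℕ), 1 ≤ a → 0 < p a → ∀ k : ℕ, ρ ((k+1)*a) = (ρ a)^(k+1) := by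
    intro a ha hpa k
    induction k with
    | zero => simp
    | succ k ih =>
      have h1 : (k+2)*a = (k+1)*a + a := by ring
      rw [h1, hρmul _ _ (le_trans ha (Nat.le_mul_of_pos_left a (Nat.succ_pos k))) ha
        (hppow a hpa k) hpa, ih]
      ring
  -- main: ρ a = 1 for all a in support
  have hmain : ∀ a, 1 ≤ a → 0 < p a → ρ a = 1 := by
    intro a ha hpa
    by_contra hne
    have hρa : 0 < ρ a := hρpos hpa
    -- θ := exp (log (ρ a) / a)
    set θ : ℝ := Real.exp (Real.log (ρ a) / a) with hθ
    have hθpos : 0 < θ := Real.exp_pos _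
    have hρn : ∀ n, 1 ≤ n → 0 < p n → ρ n = θ ^ n := by
      intro n hn hpn
      -- (ρ n)^a = (ρ a)^n
      have h1 : ρ (n*a) = (ρ n)^a := by
        have := hρpow n hn hpn (a-1)
        rwa [Nat.sub_add_cancel ha, Nat.mul_comm] at this
      have h2 : ρ (n*a) = (ρ a)^n := by
        have := hρpow a ha hpa (n-1)
        rwa [Nat.sub_add_cancel hn] at this
      have h3 : (ρ n)^a = (ρ a)^n := by rw [← h1, h2]
      have hρnpos : 0 < ρ n := hρpos hpn
      -- take logs
      have h4 : (a:ℝ) * Real.log (ρ n) = (n:ℝ) * Real.log (ρ a) := by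
        have := congrArg Real.log h3
        rwa [Real.log_pow, Real.log_pow] at this
      have hane : (a:ℝ) ≠ 0 := Nat.cast_ne_zero.2 (by omega)
      have h5 : Real.log (ρ n) = (n:ℝ) * (Real.log (ρ a) / a) := by
        field_simp
        linarith [h4]
      calc ρ n = Real.exp (Real.log (ρ n)) := (Real.exp_log hρnpos).symm
        _ = Real.exp ((n:ℝ) * (Real.log (ρ a) / a)) := by rw [h5]
        _ = θ ^ n := by rw [← Real.exp_nat_mul]
    rcases lt_or_gt_of_ne hne with hlt | hgt
    · -- ρ a < 1 : q summable
      have hθlt : θ < 1 := by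
        rw [hθ, Real.exp_lt_one_iff]
        exact div_neg_of_neg_of_pos (Real.log_neg hρa hlt) (by exact_mod_cast (by omega : 0 < a))
      apply hrecq
      refine Summable.of_nonneg_of_le hq ?_
        (summable_geometric_of_lt_one (le_of_lt hθpos) hθlt)
      intro n
      rcases Nat.eq_zero_or_pos n with rfl | hn
      · simpa using hq1 0
      · rcases le_or_gt (p n) 0 with hpn | hpn
        · have : p n = 0 := le_antisymm hpn (hp n)
          have : q n = 0 := by
            by_contra hqn
            have : 0 < q n := lt_of_le_of_ne (hq n) (Ne.symm hqn)
            exact absurd ((hsupp n).2 this) (by rw [‹p n = 0›]; exact lt_irrefl 0)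
          rw [this]; positivity
        · have := hρn n hn hpn
          have hqn : q n = θ ^ n * p n := by
            rw [← this, hρ]; field_simp
          rw [hqn]
          exact mul_le_of_le_one_right (by positivity) (hp1 n)
    · -- ρ a > 1 : p summable
      have hθgt : (1:ℝ) < θ := by
        rw [hθ, Real.one_lt_exp_iff]
        exact div_pos (Real.log_pos hgt) (by exact_mod_cast (by omega : 0 < a))
      apply hrecp
      have hθinv : θ⁻¹ < 1 := inv_lt_one_of_one_lt₀ hθgt
      refine Summable.of_nonneg_of_le hp ?_
        (summable_geometric_of_lt_one (by positivity) hθinv)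
      intro n
      rcases Nat.eq_zero_or_pos n with rfl | hn
      · simpa using hp1 0
      · rcases le_or_gt (p n) 0 with hpn | hpn
        · have : p n = 0 := le_antisymm hpn (hp n)
          rw [this]; positivity
        · have hr := hρn n hn hpn
          have hpq : p n * θ ^ n = q n := by
            rw [← hr, hρ]; field_simp
          have : p n = q n * θ⁻¹ ^ n := by
            rw [← hpq, mul_assoc, ← mul_pow, mul_inv_cancel₀ (ne_of_gt hθpos), one_pow, mul_one]
          rw [this]
          calc q n * θ⁻¹ ^ n ≤ 1 * θ⁻¹ ^ n := by
                apply mul_le_mul_of_nonneg_right (hq1 n) (by positivity)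
            _ = θ⁻¹ ^ n := one_mul _
  intro n
  rcases Nat.eq_zero_or_pos n with rfl | hn
  · exact h0
  · rcases le_or_gt (p n) 0 with hpn | hpn
    · have hp0 : p n = 0 := le_antisymm hpn (hp n)
      have hq0 : q n = 0 := by
        by_contra hqn
        have : 0 < q n := lt_of_le_of_ne (hq n) (Ne.symm hqn)
        exact absurd ((hsupp n).2 this) (by rw [hp0]; exact lt_irrefl 0)
      rw [hp0, hq0]
    · have := hmain n hn hpn
      have hqn : 0 < q n := (hsupp n).1 hpn
      simp only [hρ] at this
      rw [div_eq_one_iff_eq (ne_of_gt hpn)] at this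
      linarith

section Transfer

variable {Q : Ω → Ω → ℝ} {σ : Equiv.Perm Ω}

theorem pos_transfer (hP : IsStochastic P) (hQ : IsStochastic Q)
    (hgraph : ∀ i j : Ω, 0 < P i j ↔ 0 < Q (σ i) (σ j)) :
    ∀ n (i j : Ω), 0 < stochPow P n i j ↔ 0 < stochPow Q n (σ i) (σ j) := by
  intro n
  induction n with
  | zero =>
    intro i j
    classical
    by_cases h : i = j
    · subst h; simp [stochPow]
    · have h2 : ¬ σ i = σ j := fun hc => h (σ.injective hc)
      simp only [stochPow]
      rw [if_neg h, if_neg h2]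
  | succ n ih =>
    intro i j
    constructor
    · intro h
      obtain ⟨l, hl1, hl2⟩ := pow_pos_decomp hP (n := n) (m := 1) h
      rw [pow_one' hP] at hl2
      have := pow_pos_comp hQ (n := n) (m := 1) (σ l) ((ih i l).1 hl1)
        (by rw [pow_one' hQ]; exact (hgraph l j).1 hl2)
      exact this
    · intro h
      obtain ⟨l', hl1, hl2⟩ := pow_pos_decomp hQ (n := n) (m := 1) h
      obtain ⟨l, rfl⟩ := σ.surjective l'
      rw [pow_one' hQ] at hl2
      exact pow_pos_comp hP (n := n) (m := 1) l ((ih i l).2 hl1)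
        (by rw [pow_one' hP]; exact (hgraph l j).2 hl2)

theorem diag_eq (hP : IsStochastic P) (hQ : IsStochastic Q)
    (hPrec : ¬ Summable (fun n => stochPow P n i i))
    (hQrec : ¬ Summable (fun n => stochPow Q n (σ i) (σ i)))
    (hgraph : ∀ i j : Ω, 0 < P i j ↔ 0 < Q (σ i) (σ j))
    (hratio : ∀ (n m : ℕ), 1 ≤ n → 1 ≤ m → ∀ i j k : Ω,
      0 < stochPow P n i j * stochPow P m j k →
      stochPow P n i j * stochPow P m j k / stochPow P (n + m) i k =
        stochPow Q n (σ i) (σ j) * stochPow Q m (σ j) (σ k) /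
          stochPow Q (n + m) (σ i) (σ k)) :
    ∀ n, stochPow P n i i = stochPow Q n (σ i) (σ i) := by
  apply seq_eq
  · exact fun n => pow_nonneg hP n i i
  · exact fun n => pow_nonneg hQ n (σ i) (σ i)
  · exact fun n => pow_le_one hP n i i
  · exact fun n => pow_le_one hQ n (σ i) (σ i)
  · simp [stochPow]
  · exact fun n => pos_transfer hP hQ hgraph n i i
  · intro n m hn hm hpn hpm
    have hpnm : 0 < stochPow P (n + m) i i := pow_pos_comp hP i hpn hpm
    have hqn : 0 < stochPow Q n (σ i) (σ i) := (pos_transfer hP hQ hgraph n i i).1 hpn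
    have hqm : 0 < stochPow Q m (σ i) (σ i) := (pos_transfer hP hQ hgraph m i i).1 hpm
    have hqnm : 0 < stochPow Q (n + m) (σ i) (σ i) :=
      (pos_transfer hP hQ hgraph (n+m) i i).1 hpnm
    have h := hratio n m hn hm i i i (mul_pos hpn hpm)
    rw [div_eq_div_iff (ne_of_gt hpnm) (ne_of_gt hqnm)] at h
    linarith
  · exact fun n m => chapman_le hP n m i i i
  · exact hPrec
  · exact hQrec

/-- cycle lemma: products around cycles agree -/
theorem cycle_eq (hP : IsStochastic P) (hQ : IsStochastic Q)
    (hPrec : ∀ j, ¬ Summable (fun n => stochPow P n j j))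
    (hQrec : ∀ j, ¬ Summable (fun n => stochPow Q n j j))
    (hgraph : ∀ i j : Ω, 0 < P i j ↔ 0 < Q (σ i) (σ j))
    (hratio : ∀ (n m : ℕ), 1 ≤ n → 1 ≤ m → ∀ i j k : Ω,
      0 < stochPow P n i j * stochPow P m j k →
      stochPow P n i j * stochPow P m j k / stochPow P (n + m) i k =
        stochPow Q n (σ i) (σ j) * stochPow Q m (σ j) (σ k) /
          stochPow Q (n + m) (σ i) (σ k)) :
    ∀ (n m : ℕ), 1 ≤ n → 1 ≤ m → ∀ i k : Ω,
      stochPow P n i k * stochPow P m k i =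
        stochPow Q n (σ i) (σ k) * stochPow Q m (σ k) (σ i) := by
  intro n m hn hm i k
  rcases le_or_gt (stochPow P n i k * stochPow P m k i) 0 with hle | hpos
  · -- zero case
    have h0 : stochPow P n i k * stochPow P m k i = 0 :=
      le_antisymm hle (mul_nonneg (pow_nonneg hP n i k) (pow_nonneg hP m k i))
    rw [h0]
    rcases mul_eq_zero.1 h0 with h | h
    · have : ¬ 0 < stochPow Q n (σ i) (σ k) := by
        intro hc
        have := (pos_transfer hP hQ hgraph n i k).2 hc
        rw [h] at this; exact lt_irrefl 0 this
      have := le_antisymm (not_lt.1 this) (pow_nonneg hQ n (σ i) (σ k))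
      simp [this]
    · have : ¬ 0 < stochPow Q m (σ k) (σ i) := by
        intro hc
        have := (pos_transfer hP hQ hgraph m k i).2 hc
        rw [h] at this; exact lt_irrefl 0 this
      have := le_antisymm (not_lt.1 this) (pow_nonneg hQ m (σ k) (σ i))
      simp [this]
  · have hpn : 0 < stochPow P n i k := by
      rcases mul_pos_iff.1 hpos with ⟨h1, _⟩ | ⟨h1, h2⟩
      · exact h1
      · exact absurd (pow_nonneg hP m k i) (not_le.2 h2)
    have hpm : 0 < stochPow P m k i := by
      rcases mul_pos_iff.1 hpos with ⟨_, h2⟩ | ⟨h1, _⟩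
      · exact h2
      · exact absurd (pow_nonneg hP n i k) (not_le.2 h1)
    have hdiag : stochPow P (n+m) i i = stochPow Q (n+m) (σ i) (σ i) :=
      diag_eq hP hQ (hPrec i) (hQrec (σ i)) hgraph hratio (n+m)
    have hpnm : 0 < stochPow P (n+m) i i := pow_pos_comp hP k hpn hpm
    have hqnm : 0 < stochPow Q (n+m) (σ i) (σ i) := by rw [← hdiag]; exact hpnm
    have h := hratio n m hn hm i k i hpos
    rw [div_eq_div_iff (ne_of_gt hpnm) (ne_of_gt hqnm)] at h
    rw [← hdiag] at h
    exact mul_right_cancel₀ (ne_of_gt hpnm) h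

end Transfer

section Harmonic

/-- summability of `l ↦ P^n k l * g l` for bounded nonneg `g` -/
theorem gsummable (hP : IsStochastic P) (g : Ω → ℝ) (hg0 : ∀ l, 0 ≤ g l)
    (hg1 : ∀ l, g l ≤ 1) (n : ℕ) (k : Ω) :
    Summable (fun l => stochPow P n k l * g l) :=
  Summable.of_nonneg_of_le (fun l => mul_nonneg (pow_nonneg hP n k l) (hg0 l))
    (fun l => mul_le_of_le_one_right (pow_nonneg hP n k l) (hg1 l))
    (rowSummable (pow_stochastic hP n) k)

theorem iterate_eq (hP : IsStochastic P) (g : Ω → ℝ) (hg0 : ∀ l, 0 ≤ g l)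
    (hg1 : ∀ l, g l ≤ 1) (n : ℕ) (k : Ω) :
    ∑' l, stochPow P (n+1) k l * g l
      = ∑' j, stochPow P n k j * (∑' l, P j l * g l) := by
  have h1 : ∀ l, stochPow P (n+1) k l * g l
      = ∑' j, stochPow P n k j * P j l * g l := by
    intro l
    rw [chapman hP n 1 k l, ← tsum_mul_right]
    congr 1
    funext j
    rw [pow_one' hP]
  rw [tsum_congr h1]
  -- swap
  have hnn : ∀ j l, (0:ℝ) ≤ stochPow P n k j * P j l * g l := fun j l =>
    mul_nonneg (mul_nonneg (pow_nonneg hP n k j) (hP.1 j l)) (hg0 l)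
  have hsl : ∀ j, Summable (fun l => stochPow P n k j * P j l * g l) := by
    intro j
    have := (gsummable hP g hg0 hg1 1 j).mul_left (stochPow P n k j)
    apply this.congr
    intro l
    rw [pow_one' hP]
    ring
  have hsj : ∀ l, Summable (fun j => stochPow P n k j * P j l * g l) := by
    intro l
    have hb : Summable (fun j => stochPow P n k j * P j l) :=
      Summable.of_nonneg_of_le (fun j => mul_nonneg (pow_nonneg hP n k j) (hP.1 j l))
        (fun j => mul_le_of_le_one_right (pow_nonneg hP n k j) (entry_le_one hP j l))
        (rowSummable (pow_stochastic hP n) k)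
    exact hb.mul_right (g l)
  have hunc : Summable (Function.uncurry (fun j l => stochPow P n k j * P j l * g l)) := by
    rw [summable_prod_of_nonneg (by intro ⟨j, l⟩; exact hnn j l)]
    refine ⟨hsl, ?_⟩
    have heq : (fun j => ∑' l, (Function.uncurry
        (fun j l => stochPow P n k j * P j l * g l)) (j, l))
        = fun j => stochPow P n k j * (∑' l, P j l * g l) := by
      funext j
      simp only [Function.uncurry]
      have : ∀ l, stochPow P n k j * P j l * g l
          = stochPow P n k j * (P j l * g l) := fun l => mul_assoc _ _ _
      rw [tsum_congr this, tsum_mul_left]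
    rw [heq]
    refine Summable.of_nonneg_of_le
      (fun j => mul_nonneg (pow_nonneg hP n k j)
        (tsum_nonneg fun l => mul_nonneg (hP.1 j l) (hg0 l))) ?_
      (rowSummable (pow_stochastic hP n) k)
    intro j
    apply mul_le_of_le_one_right (pow_nonneg hP n k j)
    calc ∑' l, P j l * g l ≤ ∑' l, P j l :=
          Summable.tsum_le_tsum (fun l => mul_le_of_le_one_right (hP.1 j l) (hg1 l))
            (gsummable hP g hg0 hg1 1 j |>.congr (by intro l; rw [pow_one' hP]))
            (rowSummable hP j)
      _ = 1 := rowTsum hP j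
  rw [Summable.tsum_comm' hunc hsl hsj]
  congr 1
  funext j
  have : ∀ l, stochPow P n k j * P j l * g l
      = stochPow P n k j * (P j l * g l) := fun l => mul_assoc _ _ _
  rw [tsum_congr this, tsum_mul_left]

/-- every bounded superharmonic function is harmonic when all states are recurrent -/
theorem superharmonic_harmonic (hP : IsStochastic P)
    (hrec : ∀ j, ¬ Summable fun n => stochPow P n j j)
    (g : Ω → ℝ) (hg0 : ∀ l, 0 ≤ g l) (hg1 : ∀ l, g l ≤ 1)
    (hsuper : ∀ k, ∑' l, P k l * g l ≤ g k) :
    ∀ k, ∑' l, P k l * g l = g k := by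
  set e : Ω → ℝ := fun l => g l - ∑' m, P l m * g m with he
  have hP1g : ∀ j, Summable (fun l => P j l * g l) := fun j =>
    (gsummable hP g hg0 hg1 1 j).congr (by intro l; rw [pow_one' hP])
  have he0 : ∀ l, 0 ≤ e l := fun l => sub_nonneg.2 (hsuper l)
  have he1 : ∀ l, e l ≤ 1 := fun l =>
    le_trans (sub_le_self _ (tsum_nonneg fun m => mul_nonneg (hP.1 l m) (hg0 m))) (hg1 l)
  -- key identity : P^{n+1} g = P^n g - P^n e
  have hkey : ∀ n k, ∑' l, stochPow P (n+1) k l * g l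
      = (∑' l, stochPow P n k l * g l) - ∑' l, stochPow P n k l * e l := by
    intro n k
    rw [iterate_eq hP g hg0 hg1 n k]
    have h1 : ∀ j, stochPow P n k j * (∑' l, P j l * g l)
        = stochPow P n k j * g j - stochPow P n k j * e j := by
      intro j
      rw [he]
      ring
    rw [tsum_congr h1]
    exact Summable.tsum_sub (gsummable hP g hg0 hg1 n k) (gsummable hP e he0 he1 n k)
  -- telescoping
  have htel : ∀ N k, ∑ n ∈ Finset.range N, (∑' l, stochPow P n k l * e l)
      = g k - ∑' l, stochPow P N k l * g l := by
    intro N k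
    induction N with
    | zero =>
      classical
      simp only [Finset.range_zero, Finset.sum_empty]
      rw [tsum_eq_single k]
      · simp [stochPow]
      · intro l hl
        have : stochPow P 0 k l = 0 := by
          simp only [stochPow]; rw [if_neg (fun h => hl h.symm)]
        rw [this, zero_mul]
    | succ N ih =>
      rw [Finset.sum_range_succ, ih, hkey N k]
      ring
  -- conclude: e j = 0 for every j
  have hez : ∀ j, e j = 0 := by
    intro j
    by_contra hne
    have hej : 0 < e j := lt_of_le_of_ne (he0 j) (Ne.symm hne)
    -- bounded partial sums for n ↦ P^n_{jj} * e j
    have hbound : ∀ N, ∑ n ∈ Finset.range N, stochPow P n j j * e j ≤ 1 := by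
      intro N
      have h1 : ∀ n, stochPow P n j j * e j ≤ ∑' l, stochPow P n j l * e l := by
        intro n
        exact Summable.le_tsum (gsummable hP e he0 he1 n j) j
          (fun l _ => mul_nonneg (pow_nonneg hP n j l) (he0 l))
      calc ∑ n ∈ Finset.range N, stochPow P n j j * e j
          ≤ ∑ n ∈ Finset.range N, (∑' l, stochPow P n j l * e l) :=
            Finset.sum_le_sum (fun n _ => h1 n)
        _ = g j - ∑' l, stochPow P N j l * g l := htel N j
        _ ≤ g j := sub_le_self _ (tsum_nonneg fun l =>
            mul_nonneg (pow_nonneg hP N j l) (hg0 l))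
        _ ≤ 1 := hg1 j
    have hsum : Summable (fun n => stochPow P n j j * e j) := by
      apply summable_of_sum_range_le
        (fun n => mul_nonneg (pow_nonneg hP n j j) (he0 j)) hbound
    have : Summable (fun n => stochPow P n j j) := by
      have := hsum.mul_right (e j)⁻¹
      apply this.congr
      intro n
      field_simp
    exact hrec j this
  intro k
  have := hez k
  rw [he] at this
  simp only at this
  linarith

/-- maximum principle along paths -/
theorem max_principle (hP : IsStochastic P) (g : Ω → ℝ) (M : ℝ) (hM : 0 ≤ M)
    (hg0 : ∀ l, 0 ≤ g l) (hgM : ∀ l, g l ≤ M)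
    (hharm : ∀ k, ∑' l, P k l * g l = g k) :
    ∀ n (i j : Ω), 0 < stochPow P n i j → g i = M → g j = M := by
  intro n
  induction n with
  | zero =>
    intro i j hpos hgi
    classical
    by_cases h : i = j
    · subst h; exact hgi
    · exfalso
      have : stochPow P 0 i j = 0 := by simp only [stochPow]; rw [if_neg h]
      rw [this] at hpos; exact lt_irrefl 0 hpos
  | succ n ih =>
    intro i j hpos hgi
    obtain ⟨l, hl1, hl2⟩ := pow_pos_decomp hP (n := n) (m := 1) hpos
    rw [pow_one' hP] at hl2
    have hgl : g l = M := ih i l hl1 hgi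
    -- at l : harmonic and g ≤ M forces g = M on successors
    have hsumg : Summable (fun m => P l m * g m) := by
      refine Summable.of_nonneg_of_le (fun m => mul_nonneg (hP.1 l m) (hg0 m)) ?_
        ((rowSummable hP l).mul_right M)
      intro m
      exact mul_le_mul_of_nonneg_left (hgM m) (hP.1 l m)
    have hsumM : Summable (fun m => P l m * M) := (rowSummable hP l).mul_right M
    have hzero : ∑' m, P l m * (M - g m) = 0 := by
      have h1 : ∀ m, P l m * (M - g m) = P l m * M - P l m * g m := fun m => by ring
      rw [tsum_congr h1, Summable.tsum_sub hsumM hsumg]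
      have h2 : ∑' m, P l m * M = M := by
        rw [tsum_mul_right, rowTsum hP l, one_mul]
      rw [h2, hharm l, hgl]
      ring
    have hterm : P l j * (M - g j) = 0 := by
      have hsummable : Summable (fun m => P l m * (M - g m)) := by
        have h1 : ∀ m, P l m * (M - g m) = P l m * M - P l m * g m := fun m => by ring
        exact ((hsumM.sub hsumg).congr (fun m => (h1 m).symm))
      have hle := Summable.le_tsum hsummable j
        (fun m _ => mul_nonneg (hP.1 l m) (sub_nonneg.2 (hgM m)))
      rw [hzero] at hle
      exact le_antisymm hle (mul_nonneg (hP.1 l j) (sub_nonneg.2 (hgM j)))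
    rcases mul_eq_zero.1 hterm with h | h
    · exact absurd h (ne_of_gt hl2)
    · linarith
end Harmonic

section Closed

open Classical in
/-- iterates of the hitting indicator of `i₀` -/
noncomputable def hitFn (P : Ω → Ω → ℝ) (i₀ : Ω) : ℕ → Ω → ℝ
  | 0 => fun k => if k = i₀ then 1 else 0
  | n + 1 => fun k => if k = i₀ then 1 else ∑' l, P k l * hitFn P i₀ n l

variable {i₀ : Ω}

theorem hitFn_nonneg (hP : IsStochastic P) : ∀ n k, 0 ≤ hitFn P i₀ n k := by
  intro n
  induction n with
  | zero => intro k; simp only [hitFn]; split <;> norm_num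
  | succ n ih =>
    intro k
    simp only [hitFn]
    split
    · norm_num
    · exact tsum_nonneg fun l => mul_nonneg (hP.1 k l) (ih l)

theorem hitFn_le_one (hP : IsStochastic P) : ∀ n k, hitFn P i₀ n k ≤ 1 := by
  intro n
  induction n with
  | zero => intro k; simp only [hitFn]; split <;> norm_num
  | succ n ih =>
    intro k
    simp only [hitFn]
    split
    · norm_num
    · calc ∑' l, P k l * hitFn P i₀ n l ≤ ∑' l, P k l :=
            Summable.tsum_le_tsum (fun l => mul_le_of_le_one_right (hP.1 k l) (ih l))
              (Summable.of_nonneg_of_le (fun l => mul_nonneg (hP.1 k l) (hitFn_nonneg hP n l))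
                (fun l => mul_le_of_le_one_right (hP.1 k l) (ih l)) (rowSummable hP k))
              (rowSummable hP k)
        _ = 1 := rowTsum hP k

theorem hitFn_summable (hP : IsStochastic P) (n : ℕ) (k : Ω) :
    Summable (fun l => P k l * hitFn P i₀ n l) :=
  Summable.of_nonneg_of_le (fun l => mul_nonneg (hP.1 k l) (hitFn_nonneg hP n l))
    (fun l => mul_le_of_le_one_right (hP.1 k l) (hitFn_le_one hP n l)) (rowSummable hP k)

theorem hitFn_mono (hP : IsStochastic P) : ∀ n k, hitFn P i₀ n k ≤ hitFn P i₀ (n+1) k := by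
  intro n
  induction n with
  | zero =>
    intro k
    simp only [hitFn]
    split
    · norm_num
    · exact tsum_nonneg fun l => mul_nonneg (hP.1 k l) (hitFn_nonneg hP 0 l)
  | succ n ih =>
    intro k
    simp only [hitFn]
    split
    · norm_num
    · exact Summable.tsum_le_tsum (fun l => mul_le_mul_of_nonneg_left (ih l) (hP.1 k l))
        (hitFn_summable hP n k) (hitFn_summable hP (n+1) k)

theorem hitFn_base : ∀ n, hitFn P i₀ n i₀ = 1 := by
  intro n; cases n <;> simp [hitFn]

/-- the limit hitting function -/
noncomputable def hitLim (P : Ω → Ω → ℝ) (i₀ : Ω) : Ω → ℝ := fun k => ⨆ n, hitFn P i₀ n k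

theorem hitLim_bdd (hP : IsStochastic P) (k : Ω) :
    BddAbove (Set.range fun n => hitFn P i₀ n k) := by
  refine ⟨1, ?_⟩
  rintro x ⟨n, rfl⟩
  exact hitFn_le_one hP n k

theorem hitLim_nonneg (hP : IsStochastic P) (k : Ω) : 0 ≤ hitLim P i₀ k :=
  le_trans (hitFn_nonneg hP 0 k) (le_ciSup (hitLim_bdd hP k) 0)

theorem hitLim_le_one (hP : IsStochastic P) (k : Ω) : hitLim P i₀ k ≤ 1 :=
  ciSup_le fun n => hitFn_le_one hP n k

theorem hitLim_base (hP : IsStochastic P) : hitLim P i₀ i₀ = 1 := by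
  unfold hitLim
  have : (fun n : ℕ => hitFn P i₀ n i₀) = fun _ => (1:ℝ) := funext hitFn_base
  rw [this, ciSup_const]

theorem hitFn_mono' (hP : IsStochastic P) (k : Ω) :
    Monotone (fun n => hitFn P i₀ n k) :=
  monotone_nat_of_le_succ (fun n => hitFn_mono hP n k)

theorem hitFn_tendsto (hP : IsStochastic P) (k : Ω) :
    Filter.Tendsto (fun n => hitFn P i₀ n k) Filter.atTop (nhds (hitLim P i₀ k)) :=
  tendsto_atTop_ciSup (hitFn_mono' hP k) (hitLim_bdd hP k)

theorem hitLim_super (hP : IsStochastic P) (k : Ω) :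
    ∑' l, P k l * hitLim P i₀ l ≤ hitLim P i₀ k := by
  have hsum : Summable (fun l => P k l * hitLim P i₀ l) :=
    Summable.of_nonneg_of_le (fun l => mul_nonneg (hP.1 k l) (hitLim_nonneg hP l))
      (fun l => mul_le_of_le_one_right (hP.1 k l) (hitLim_le_one hP l)) (rowSummable hP k)
  have htend : Filter.Tendsto (fun n => ∑' l, P k l * hitFn P i₀ n l)
      Filter.atTop (nhds (∑' l, P k l * hitLim P i₀ l)) := by
    apply tendsto_tsum_of_dominated_convergence (bound := fun l => P k l) (rowSummable hP k)
    · intro l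
      exact Filter.Tendsto.const_mul _ (hitFn_tendsto hP l)
    · filter_upwards with n l
      rw [Real.norm_eq_abs, abs_of_nonneg (mul_nonneg (hP.1 k l) (hitFn_nonneg hP n l))]
      exact mul_le_of_le_one_right (hP.1 k l) (hitFn_le_one hP n l)
  apply le_of_tendsto htend
  filter_upwards with n
  -- ∑' l, P k l * hitFn n l ≤ hitLim k : it equals hitFn (n+1) k when k ≠ i₀, else ≤ 1
  by_cases hk : k = i₀
  · rw [hk, hitLim_base hP]
    calc ∑' l, P i₀ l * hitFn P i₀ n l ≤ ∑' l, P i₀ l :=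
          Summable.tsum_le_tsum (fun l => mul_le_of_le_one_right (hP.1 i₀ l) (hitFn_le_one hP n l))
            (hitFn_summable hP n i₀) (rowSummable hP i₀)
      _ = 1 := rowTsum hP i₀
  · have : ∑' l, P k l * hitFn P i₀ n l = hitFn P i₀ (n+1) k := by
      simp only [hitFn]
      rw [if_neg hk]
    rw [this]
    exact le_ciSup (hitLim_bdd hP k) (n+1)

theorem hitFn_pos_leads (hP : IsStochastic P) :
    ∀ n k, 0 < hitFn P i₀ n k → ∃ m, 0 < stochPow P m k i₀ := by
  intro n
  induction n with
  | zero =>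
    intro k h
    simp only [hitFn] at h
    by_cases hk : k = i₀
    · subst hk; exact ⟨0, by simp [stochPow]⟩
    · rw [if_neg hk] at h; exact absurd h (lt_irrefl 0)
  | succ n ih =>
    intro k h
    by_cases hk : k = i₀
    · subst hk; exact ⟨0, by simp [stochPow]⟩
    · simp only [hitFn] at h
      rw [if_neg hk] at h
      -- positive tsum => positive term
      have : ∃ l, 0 < P k l * hitFn P i₀ n l := by
        by_contra hc
        push_neg at hc
        have : ∀ l, P k l * hitFn P i₀ n l = 0 := fun l =>
          le_antisymm (hc l) (mul_nonneg (hP.1 k l) (hitFn_nonneg hP n l))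
        rw [tsum_congr this, tsum_zero] at h
        exact lt_irrefl 0 h
      obtain ⟨l, hl⟩ := this
      have hPkl : 0 < P k l := by
        rcases mul_pos_iff.1 hl with ⟨h1, _⟩ | ⟨_, h2⟩
        · exact h1
        · exact absurd (hitFn_nonneg hP n l) (not_le.2 h2)
      have hfl : 0 < hitFn P i₀ n l := by
        rcases mul_pos_iff.1 hl with ⟨_, h2⟩ | ⟨h1, _⟩
        · exact h2
        · exact absurd (hP.1 k l) (not_le.2 h1)
      obtain ⟨m, hm⟩ := ih l hfl
      refine ⟨1 + m, ?_⟩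
      exact pow_pos_comp hP l (by rw [pow_one' hP]; exact hPkl) hm

/-- closedness: every state reachable from `i` leads back to `i` -/
theorem leads_back (hP : IsStochastic P)
    (hrec : ∀ j, ¬ Summable fun n => stochPow P n j j)
    {a : ℕ} {i j : Ω} (hij : 0 < stochPow P a i j) : ∃ m, 0 < stochPow P m j i := by
  have hharm := superharmonic_harmonic hP hrec (hitLim P i)
    (hitLim_nonneg hP) (hitLim_le_one hP) (hitLim_super hP)
  have hj1 : hitLim P i j = 1 :=
    max_principle hP (hitLim P i) 1 zero_le_one (hitLim_nonneg hP) (hitLim_le_one hP)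
      hharm a i j hij (hitLim_base hP)
  have : ∃ n, 0 < hitFn P i n j := by
    by_contra hc
    push_neg at hc
    have : hitLim P i j ≤ 0 := ciSup_le fun n => hc n
    rw [hj1] at this
    linarith
  obtain ⟨n, hn⟩ := this
  exact hitFn_pos_leads hP n j hn

end Closed

section Main

variable {Q : Ω → Ω → ℝ} {σ : Equiv.Perm Ω}

theorem exists_return (hP : IsStochastic P) {k : Ω}
    (hrec : ¬ Summable fun n => stochPow P n k k) :
    ∃ n, 1 ≤ n ∧ 0 < stochPow P n k k := by
  by_contra hc
  push_neg at hc
  apply hrec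
  have h0 : ∀ n, 1 ≤ n → stochPow P n k k = 0 := fun n hn =>
    le_antisymm (hc n hn) (pow_nonneg hP n k k)
  have : (fun n => stochPow P (n + 1) k k) = fun _ => (0:ℝ) := by
    funext n; exact h0 (n+1) (Nat.le_add_left 1 n)
  have hs : Summable (fun n => stochPow P (n + 1) k k) := by
    rw [this]; exact summable_zero
  exact (summable_nat_add_iff 1).1 hs

theorem ratio_consistent (hP : IsStochastic P) (hQ : IsStochastic Q)
    (hPrec : ∀ j, ¬ Summable fun n => stochPow P n j j)
    (hQrec : ∀ j, ¬ Summable fun n => stochPow Q n j j)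
    (hgraph : ∀ i j : Ω, 0 < P i j ↔ 0 < Q (σ i) (σ j))
    (hratio : ∀ (n m : ℕ), 1 ≤ n → 1 ≤ m → ∀ i j k : Ω,
      0 < stochPow P n i j * stochPow P m j k →
      stochPow P n i j * stochPow P m j k / stochPow P (n + m) i k =
        stochPow Q n (σ i) (σ j) * stochPow Q m (σ j) (σ k) /
          stochPow Q (n + m) (σ i) (σ k)) (i : Ω) :
    ∀ (k : Ω) (n n' : ℕ), 1 ≤ n → 1 ≤ n' →
      0 < stochPow P n i k → 0 < stochPow P n' i k →
      stochPow Q n (σ i) (σ k) / stochPow P n i k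
        = stochPow Q n' (σ i) (σ k) / stochPow P n' i k := by
  intro k n n' hn hn' hpn hpn'
  have hQrec' : ∀ j : Ω, ¬ Summable fun m => stochPow Q m (σ j) (σ j) := fun j => hQrec (σ j)
  obtain ⟨m, hm⟩ := leads_back hP hPrec hpn
  rcases Nat.eq_zero_or_pos m with rfl | hm1
  · -- k = i
    have hk : k = i := by
      by_contra hne
      have : stochPow P 0 k i = 0 := by
        simp only [stochPow]; rw [if_neg hne]
      rw [this] at hm; exact lt_irrefl 0 hm
    subst hk
    rw [diag_eq hP hQ (hPrec k) (hQrec (σ k)) hgraph hratio n,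
        diag_eq hP hQ (hPrec k) (hQrec (σ k)) hgraph hratio n']
    have h1 : 0 < stochPow Q n (σ k) (σ k) := (pos_transfer hP hQ hgraph n k k).1 hpn
    have h2 : 0 < stochPow Q n' (σ k) (σ k) := (pos_transfer hP hQ hgraph n' k k).1 hpn'
    rw [div_self (ne_of_gt h1), div_self (ne_of_gt h2)]
  · have hcycle := cycle_eq hP hQ hPrec hQrec hgraph hratio n m hn hm1 i k
    have hcycle' := cycle_eq hP hQ hPrec hQrec hgraph hratio n' m hn' hm1 i k
    have hqm : 0 < stochPow Q m (σ k) (σ i) := (pos_transfer hP hQ hgraph m k i).1 hm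
    have hqn : 0 < stochPow Q n (σ i) (σ k) := (pos_transfer hP hQ hgraph n i k).1 hpn
    have hqn' : 0 < stochPow Q n' (σ i) (σ k) := (pos_transfer hP hQ hgraph n' i k).1 hpn'
    rw [div_eq_div_iff (ne_of_gt hpn) (ne_of_gt hpn')]
    -- Q^n P^{n'} = Q^{n'} P^n  from the two cycle identities
    have h1 : stochPow P n i k * stochPow P m k i
        = stochPow Q n (σ i) (σ k) * stochPow Q m (σ k) (σ i) := hcycle
    have h2 : stochPow P n' i k * stochPow P m k i
        = stochPow Q n' (σ i) (σ k) * stochPow Q m (σ k) (σ i) := hcycle'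
    have hc := mul_right_cancel₀ (ne_of_gt (mul_pos hm hqm))
      (show (stochPow Q n (σ i) (σ k) * stochPow P n' i k)
          * (stochPow P m k i * stochPow Q m (σ k) (σ i))
        = (stochPow Q n' (σ i) (σ k) * stochPow P n i k)
          * (stochPow P m k i * stochPow Q m (σ k) (σ i)) by
        linear_combination stochPow Q n (σ i) (σ k) * stochPow Q m (σ k) (σ i) * h2
          - stochPow Q n' (σ i) (σ k) * stochPow Q m (σ k) (σ i) * h1)
    exact hc

theorem one_sided (hP : IsStochastic P) (hQ : IsStochastic Q)
    (hPrec : ∀ j, ¬ Summable fun n => stochPow P n j j)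
    (hQrec : ∀ j, ¬ Summable fun n => stochPow Q n j j)
    (hgraph : ∀ i j : Ω, 0 < P i j ↔ 0 < Q (σ i) (σ j))
    (hratio : ∀ (n m : ℕ), 1 ≤ n → 1 ≤ m → ∀ i j k : Ω,
      0 < stochPow P n i j * stochPow P m j k →
      stochPow P n i j * stochPow P m j k / stochPow P (n + m) i k =
        stochPow Q n (σ i) (σ j) * stochPow Q m (σ j) (σ k) /
          stochPow Q (n + m) (σ i) (σ k)) :
    ∀ i j : Ω, 0 < P i j → P i j ≤ Q (σ i) (σ j) := by
  intro i j hij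
  classical
  -- the reachable set and the ratio function
  set E : Ω → Prop := fun k => ∃ n, 1 ≤ n ∧ 0 < stochPow P n i k with hE
  set r : Ω → ℝ := fun k =>
    if hk : E k then stochPow Q (hk.choose) (σ i) (σ k) / stochPow P (hk.choose) i k
    else 1 with hr
  have hspec : ∀ k (n : ℕ), 1 ≤ n → 0 < stochPow P n i k →
      stochPow Q n (σ i) (σ k) = r k * stochPow P n i k := by
    intro k n hn hpos
    have hk : E k := ⟨n, hn, hpos⟩
    rw [hr]
    simp only [dif_pos hk]
    obtain ⟨hc1, hc2⟩ := hk.choose_spec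
    have := ratio_consistent hP hQ hPrec hQrec hgraph hratio i k n hk.choose hn hc1 hpos hc2
    field_simp at this ⊢
    linarith [this]
  have hrpos : ∀ k, 0 < r k := by
    intro k
    rw [hr]
    by_cases hk : E k
    · simp only [dif_pos hk]
      obtain ⟨hc1, hc2⟩ := hk.choose_spec
      exact div_pos ((pos_transfer hP hQ hgraph _ i k).1 hc2) hc2
    · simp only [dif_neg hk]; norm_num
  have hrbase : r i = 1 := by
    obtain ⟨n, hn, hpos⟩ := exists_return hP (hPrec i)
    have h1 := hspec i n hn hpos
    rw [← diag_eq hP hQ (hPrec i) (hQrec (σ i)) hgraph hratio n] at h1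
    have := mul_right_cancel₀ (ne_of_gt hpos) (show 1 * stochPow P n i i
      = r i * stochPow P n i i by rw [one_mul]; exact h1)
    exact this.symm
  -- edge relation
  have hedge : ∀ k l, E k → 0 < P k l → Q (σ k) (σ l) * r k = r l * P k l := by
    intro k l hk hkl
    obtain ⟨n, hn, hkpos⟩ := hk
    have hp1 : 0 < stochPow P 1 k l := by rw [pow_one' hP]; exact hkl
    have hnl : 0 < stochPow P (n+1) i l := pow_pos_comp hP k hkpos hp1
    have hq := hratio n 1 hn (le_refl 1) i k l (mul_pos hkpos hp1)
    have hQn := hspec k n hn hkpos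
    have hQnl := hspec l (n+1) (Nat.le_add_left 1 n) hnl
    rw [hQn, hQnl] at hq
    have hqnl : 0 < stochPow Q (n+1) (σ i) (σ l) := by
      rw [hQnl]; exact mul_pos (hrpos l) hnl
    rw [div_eq_div_iff (ne_of_gt hnl) (ne_of_gt (mul_pos (hrpos l) hnl))] at hq
    have hkey : stochPow Q 1 (σ k) (σ l) * r k = r l * stochPow P 1 k l := by
      apply mul_left_cancel₀ (ne_of_gt hkpos)
      apply mul_right_cancel₀ (ne_of_gt hnl)
      linear_combination -hq
    rw [pow_one' hP] at hkey
    rw [pow_one' hQ] at hkey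
    exact hkey
  -- row identity at reachable points
  have hrow : ∀ k, E k → Summable (fun l => P k l * r l) ∧ (∑' l, P k l * r l) = r k := by
    intro k hk
    have hfun : ∀ l, Q (σ k) (σ l) = P k l * r l / r k := by
      intro l
      rcases lt_or_eq_of_le (hP.1 k l) with hpos | heq
      · have he := hedge k l hk hpos
        field_simp [ne_of_gt (hrpos k)]
        linear_combination he
      · have h0 : Q (σ k) (σ l) = 0 := by
          by_contra hne
          have : 0 < Q (σ k) (σ l) := lt_of_le_of_ne (hQ.1 (σ k) (σ l)) (Ne.symm hne)
          have := (hgraph k l).2 this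
          rw [← heq] at this; exact lt_irrefl 0 this
        rw [h0, ← heq]
        simp
    have hsum0 : Summable (fun l => Q (σ k) (σ l)) :=
      (rowSummable hQ (σ k)).comp_injective σ.injective
    have htsum0 : ∑' l, Q (σ k) (σ l) = 1 := by
      rw [σ.tsum_eq (fun l' => Q (σ k) l')]
      exact rowTsum hQ (σ k)
    have hsum1 : Summable (fun l => P k l * r l / r k) := hsum0.congr hfun
    have hsum2 : Summable (fun l => P k l * r l) := by
      have := hsum1.mul_right (r k)
      apply this.congr
      intro l
      exact div_mul_cancel₀ _ (ne_of_gt (hrpos k))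
    constructor
    · exact hsum2
    · have h1 : ∑' l, P k l * r l / r k = 1 := by
        rw [← tsum_congr hfun]; exact htsum0
      rw [tsum_div_const, div_eq_one_iff_eq (ne_of_gt (hrpos k))] at h1
      exact h1
  -- min(r,1) is superharmonic, hence harmonic, and equals 1 on reachable states
  set g : Ω → ℝ := fun l => min (r l) 1 with hg
  have hg0 : ∀ l, 0 ≤ g l := fun l => le_min (le_of_lt (hrpos l)) zero_le_one
  have hg1 : ∀ l, g l ≤ 1 := fun l => min_le_right _ _
  have hgsum : ∀ k, Summable (fun l => P k l * g l) := fun k =>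
    Summable.of_nonneg_of_le (fun l => mul_nonneg (hP.1 k l) (hg0 l))
      (fun l => mul_le_of_le_one_right (hP.1 k l) (hg1 l)) (rowSummable hP k)
  have hsuper : ∀ k, ∑' l, P k l * g l ≤ g k := by
    intro k
    by_cases hk : E k
    · obtain ⟨hsm, hts⟩ := hrow k hk
      apply le_min
      · calc ∑' l, P k l * g l ≤ ∑' l, P k l * r l :=
              Summable.tsum_le_tsum (fun l => mul_le_mul_of_nonneg_left (min_le_left _ _) (hP.1 k l))
                (hgsum k) hsm
          _ = r k := hts
      · calc ∑' l, P k l * g l ≤ ∑' l, P k l :=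
              Summable.tsum_le_tsum (fun l => mul_le_of_le_one_right (hP.1 k l) (hg1 l))
                (hgsum k) (rowSummable hP k)
          _ = 1 := rowTsum hP k
    · have hrk : r k = 1 := by simp only [hr]; rw [dif_neg hk]
      have hgk : g k = 1 := by rw [hg]; simp only; rw [hrk, min_self]
      rw [hgk]
      calc ∑' l, P k l * g l ≤ ∑' l, P k l :=
            Summable.tsum_le_tsum (fun l => mul_le_of_le_one_right (hP.1 k l) (hg1 l))
              (hgsum k) (rowSummable hP k)
        _ = 1 := rowTsum hP k
  have hharm := superharmonic_harmonic hP hPrec g hg0 hg1 hsuper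
  have hgi : g i = 1 := by rw [hg]; simp only; rw [hrbase, min_self]
  have hp1 : 0 < stochPow P 1 i j := by rw [pow_one' hP]; exact hij
  have hgj : g j = 1 := max_principle hP g 1 zero_le_one hg0 hg1 hharm 1 i j hp1 hgi
  have hrj : 1 ≤ r j := by
    by_contra hc
    push_neg at hc
    have : g j = r j := min_eq_left (le_of_lt hc)
    rw [hgj] at this
    linarith
  -- conclude
  have hEj : E j := ⟨1, le_refl 1, hp1⟩
  have := hspec j 1 (le_refl 1) hp1
  rw [pow_one' hP, pow_one' hQ] at this
  rw [this]
  nlinarith [hrpos j]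

end Main

end StochAux

/-- let `P, Q` be recurrent stochastic matrices over `Ω` and `σ` a permutation of
`Ω` giving a graph isomorphism between `P` and `Q` and satisfying the ratio condition
`(P^n)_{ij}(P^m)_{jk} / (P^{n+m})_{ik} = (Q^n)_{σi σj}(Q^m)_{σj σk} / (Q^{n+m})_{σi σk}` on all
triples with `(P^n)_{ij}(P^m)_{jk} > 0`.  Then `P` and `Q` are isomorphic as weighted graphs via
`σ`: `P_{ij} = Q_{σ(i) σ(j)}` for all `i, j`. -/
theorem recurrent_matrices_isomorphic {Ω : Type*} [Countable Ω] {P Q : Ω → Ω → ℝ}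
    (hP : IsStochastic P) (hQ : IsStochastic Q)
    (hPrec : IsRecurrent P) (hQrec : IsRecurrent Q)
    (σ : Equiv.Perm Ω)
    (hgraph : ∀ i j : Ω, 0 < P i j ↔ 0 < Q (σ i) (σ j))
    (hratio : ∀ (n m : ℕ), 1 ≤ n → 1 ≤ m → ∀ i j k : Ω,
      0 < stochPow P n i j * stochPow P m j k →
      stochPow P n i j * stochPow P m j k / stochPow P (n + m) i k =
        stochPow Q n (σ i) (σ j) * stochPow Q m (σ j) (σ k) /
          stochPow Q (n + m) (σ i) (σ k)) :
    ∀ i j : Ω, P i j = Q (σ i) (σ j) := by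
  intro i j
  have hPrec' : ∀ k : Ω, ¬ Summable fun n => stochPow P n k k := fun k => hPrec k
  have hQrec' : ∀ k : Ω, ¬ Summable fun n => stochPow Q n k k := fun k => hQrec k
  -- the reversed data for (Q, P, σ⁻¹)
  have hgraph' : ∀ i j : Ω, 0 < Q i j ↔ 0 < P (σ.symm i) (σ.symm j) := by
    intro i j
    have := hgraph (σ.symm i) (σ.symm j)
    rw [σ.apply_symm_apply, σ.apply_symm_apply] at this
    exact this.symm
  have hratio' : ∀ (n m : ℕ), 1 ≤ n → 1 ≤ m → ∀ i j k : Ω,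
      0 < stochPow Q n i j * stochPow Q m j k →
      stochPow Q n i j * stochPow Q m j k / stochPow Q (n + m) i k =
        stochPow P n (σ.symm i) (σ.symm j) * stochPow P m (σ.symm j) (σ.symm k) /
          stochPow P (n + m) (σ.symm i) (σ.symm k) := by
    intro n m hn hm i' j' k' hpos
    have hqn : 0 < stochPow Q n i' j' := by
      rcases mul_pos_iff.1 hpos with ⟨h1, _⟩ | ⟨_, h2⟩
      · exact h1
      · exact absurd (StochAux.pow_nonneg hQ m j' k') (not_le.2 h2)
    have hqm : 0 < stochPow Q m j' k' := by
      rcases mul_pos_iff.1 hpos with ⟨_, h2⟩ | ⟨h1, _⟩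
      · exact h2
      · exact absurd (StochAux.pow_nonneg hQ n i' j') (not_le.2 h1)
    have e1 : σ (σ.symm i') = i' := σ.apply_symm_apply i'
    have e2 : σ (σ.symm j') = j' := σ.apply_symm_apply j'
    have e3 : σ (σ.symm k') = k' := σ.apply_symm_apply k'
    have hpn : 0 < stochPow P n (σ.symm i') (σ.symm j') := by
      have := (StochAux.pos_transfer hP hQ hgraph n (σ.symm i') (σ.symm j'))
      rw [e1, e2] at this
      exact this.2 hqn
    have hpm : 0 < stochPow P m (σ.symm j') (σ.symm k') := by
      have := (StochAux.pos_transfer hP hQ hgraph m (σ.symm j') (σ.symm k'))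
      rw [e2, e3] at this
      exact this.2 hqm
    have := hratio n m hn hm (σ.symm i') (σ.symm j') (σ.symm k') (mul_pos hpn hpm)
    rw [e1, e2, e3] at this
    exact this.symm
  rcases lt_or_eq_of_le (hP.1 i j) with hpos | heq
  · have h1 : P i j ≤ Q (σ i) (σ j) :=
      StochAux.one_sided hP hQ hPrec' hQrec' hgraph hratio i j hpos
    have hqpos : 0 < Q (σ i) (σ j) := (hgraph i j).1 hpos
    have h2 : Q (σ i) (σ j) ≤ P (σ.symm (σ i)) (σ.symm (σ j)) :=
      StochAux.one_sided hQ hP hQrec' hPrec' hgraph' hratio' (σ i) (σ j) hqpos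
    rw [σ.symm_apply_apply, σ.symm_apply_apply] at h2
    linarith
  · rw [← heq]
    by_contra hne
    have : 0 < Q (σ i) (σ j) := lt_of_le_of_ne (hQ.1 (σ i) (σ j)) (fun h => hne h)
    have := (hgraph i j).2 this
    rw [← heq] at this
    exact lt_irrefl 0 this
end
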